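/- Let x : [0,∞) → ℝ be a piecewise monotone càdlàg function, t > 0, and g : ℝ → ℝ locally bounded Borel measurable. Then ∫_ℝ g(z)·u^z(x,[0,t]) dz = ∫_{(0,t]} g(x_{s−}) dUTV(x, ·)(s) + Σ_{0<s≤t, Δx_s>0} ∫_{x_{s−}}^{x_s} (g(z) − g(x_{s−})) dz, where u^z(x,[0,t]) is the number of upcrossings of the level z by x on [0,t], UTV(x,·) is the Lebesgue–Stieltjes measure of the upward total variation t ↦ UTV(x,[0,t]), and Δx_s = x_s − x_{s−}. -/

import Mathlib

open scoped ENNReal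
open Filter MeasureTheory

/-- Number of downcrossings of `[y - c/2, y + c/2]` by `x` on `[s,t]`. -/
noncomputable def downcross (x : ℝ → ℝ) (y c s t : ℝ) : ℝ≥0∞ :=
  ⨆ (n : ℕ) (_ : ∃ ρ σ : Fin n → ℝ,
      (∀ i, s ≤ ρ i ∧ ρ i ≤ σ i ∧ σ i ≤ t) ∧
      (∀ i j : Fin n, i < j → σ i ≤ ρ j) ∧
      (∀ i, y + c / 2 ≤ x (ρ i)) ∧
      (∀ i, x (σ i) < y - c / 2)), (n : ℝ≥0∞)

/-- Number of upcrossings of `[y - c/2, y + c/2]` by `x` on `[s,t]`. -/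
noncomputable def upcross (x : ℝ → ℝ) (y c s t : ℝ) : ℝ≥0∞ :=
  downcross (fun u => -x u) (-y) c s t

/-- Number of upcrossings of the level `z` by `x` on `[s,t]`, i.e. the limit as
`c → 0+` of the numbers of upcrossings of `[z - c/2, z + c/2]` (the supremum, by
monotonicity in `c`). -/
noncomputable def levelUpcross (x : ℝ → ℝ) (z s t : ℝ) : ℝ≥0∞ :=
  ⨆ (c : ℝ) (_ : 0 < c), upcross x z c s t

/-- The upward (total) variation of `x` on `[s,t]`:
`UTV(x,[s,t]) = sup_π Σ_{[u,v]∈π} max(x_v − x_u, 0)`. -/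
noncomputable def upVar (x : ℝ → ℝ) (s t : ℝ) : ℝ≥0∞ :=
  ⨆ (n : ℕ) (u : Fin (n + 1) → ℝ) (_ : Monotone u) (_ : u 0 = s)
    (_ : u (Fin.last n) = t),
    ∑ i : Fin n, ENNReal.ofReal (x (u i.succ) - x (u i.castSucc))

/-- `x` is càdlàg: right-continuous with left limits. -/
def Cadlag (x : ℝ → ℝ) : Prop :=
  (∀ a : ℝ, ContinuousWithinAt x (Set.Ici a) a) ∧
  (∀ a : ℝ, ∃ l : ℝ, Tendsto x (nhdsWithin a (Set.Iio a)) (nhds l))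

/-- `x` is piecewise monotone: every compact interval `[0,T]` splits into finitely
many intervals on which `x` is monotone. -/
def PiecewiseMonotone (x : ℝ → ℝ) : Prop :=
  ∀ T : ℝ, 0 < T → ∃ (N : ℕ) (τ : Fin (N + 1) → ℝ), Monotone τ ∧ τ 0 = 0 ∧
    τ (Fin.last N) = T ∧ ∀ i : Fin N,
      MonotoneOn x (Set.Icc (τ i.castSucc) (τ i.succ)) ∨
        AntitoneOn x (Set.Icc (τ i.castSucc) (τ i.succ))


/-- Witness predicate for `n` upcrossings. -/
def UC (x : ℝ → ℝ) (z c s t : ℝ) (n : ℕ) : Prop :=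
  ∃ ρ σ : Fin n → ℝ,
    (∀ i, s ≤ ρ i ∧ ρ i ≤ σ i ∧ σ i ≤ t) ∧
    (∀ i j : Fin n, i < j → σ i ≤ ρ j) ∧
    (∀ i, x (ρ i) ≤ z - c / 2) ∧
    (∀ i, z + c / 2 < x (σ i))

lemma upcross_eq_iSup_UC (x : ℝ → ℝ) (z c s t : ℝ) :
    upcross x z c s t = ⨆ (n : ℕ) (_ : UC x z c s t n), (n : ℝ≥0∞) := by
  unfold upcross downcross UC
  apply le_antisymm <;> refine iSup₂_le fun n hn => le_iSup₂_of_le n ?_ le_rfl <;>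
    [skip; skip] <;> ·
    obtain ⟨ρ, σ, h1, h2, h3, h4⟩ := hn
    exact ⟨ρ, σ, h1, h2, fun i => by have := h3 i; simp only at this ⊢; linarith,
      fun i => by have := h4 i; simp only at this ⊢; linarith⟩
  

lemma UC_zero (x : ℝ → ℝ) (z c s t : ℝ) : UC x z c s t 0 :=
  ⟨Fin.elim0, Fin.elim0, fun i => i.elim0, fun i => i.elim0, fun i => i.elim0, fun i => i.elim0⟩

lemma upcross_eq_of_UC {x : ℝ → ℝ} {z c s t : ℝ} {n₀ : ℕ}
    (h1 : UC x z c s t n₀) (h2 : ∀ n, UC x z c s t n → n ≤ n₀) :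
    upcross x z c s t = (n₀ : ℝ≥0∞) := by
  rw [upcross_eq_iSup_UC]
  refine le_antisymm (iSup₂_le fun n hn => Nat.cast_le.2 (h2 n hn)) ?_
  exact le_iSup₂_of_le n₀ h1 le_rfl

lemma UC_anti_c {x : ℝ → ℝ} {z c c' s t : ℝ} {n : ℕ} (hcc : c' ≤ c)
    (h : UC x z c s t n) : UC x z c' s t n := by
  obtain ⟨ρ, σ, h1, h2, h3, h4⟩ := h
  exact ⟨ρ, σ, h1, h2, fun i => by have := h3 i; linarith,
    fun i => by have := h4 i; linarith⟩

lemma upcross_anti_c {x : ℝ → ℝ} {z c c' s t : ℝ} (hcc : c' ≤ c) :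
    upcross x z c s t ≤ upcross x z c' s t := by
  rw [upcross_eq_iSup_UC, upcross_eq_iSup_UC]
  exact iSup₂_le fun n hn => le_iSup₂_of_le n (UC_anti_c hcc hn) le_rfl

lemma UC_mono_t {x : ℝ → ℝ} {z c s t t' : ℝ} {n : ℕ} (htt : t ≤ t')
    (h : UC x z c s t n) : UC x z c s t' n := by
  obtain ⟨ρ, σ, h1, h2, h3, h4⟩ := h
  exact ⟨ρ, σ, fun i => ⟨(h1 i).1, (h1 i).2.1, le_trans (h1 i).2.2 htt⟩, h2, h3, h4⟩

lemma UC_append {x : ℝ → ℝ} {z c s m : ℝ} {n : ℕ} (h : UC x z c s m n)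
    {ρ' σ' t : ℝ} (hρ : m ≤ ρ') (hρσ : ρ' ≤ σ') (hσ : σ' ≤ t) (hsm : s ≤ m)
    (hlo : x ρ' ≤ z - c / 2) (hhi : z + c / 2 < x σ') :
    UC x z c s t (n + 1) := by
  obtain ⟨ρ, σ, h1, h2, h3, h4⟩ := h
  refine ⟨Fin.snoc ρ ρ', Fin.snoc σ σ', ?_, ?_, ?_, ?_⟩
  · intro i
    refine Fin.lastCases ?_ (fun i => ?_) i
    · simp only [Fin.snoc_last]
      exact ⟨le_trans hsm hρ, hρσ, hσ⟩
    · simp only [Fin.snoc_castSucc]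
      exact ⟨(h1 i).1, (h1 i).2.1, le_trans (h1 i).2.2 (le_trans hρ (le_trans hρσ hσ))⟩
  · intro i j hij
    refine Fin.lastCases ?_ (fun j hij => ?_) j hij
    · intro hij
      have hi : i ≠ Fin.last n := Fin.ne_last_of_lt hij
      obtain ⟨i, rfl⟩ := Fin.exists_castSucc_eq.2 hi
      simp only [Fin.snoc_castSucc, Fin.snoc_last]
      exact le_trans (h1 i).2.2 hρ
    · have hj : (j.castSucc : Fin (n+1)) ≠ Fin.last n := Fin.ne_last_of_lt (Fin.castSucc_lt_last j)
      have hi : i ≠ Fin.last n := Fin.ne_last_of_lt hij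
      obtain ⟨i, rfl⟩ := Fin.exists_castSucc_eq.2 hi
      simp only [Fin.snoc_castSucc]
      exact h2 i j (by exact_mod_cast Fin.castSucc_lt_castSucc_iff.1 hij)
  · intro i
    refine Fin.lastCases ?_ (fun i => ?_) i
    · simpa using hlo
    · simpa using h3 i
  · intro i
    refine Fin.lastCases ?_ (fun i => ?_) i
    · simpa using hhi
    · simpa using h4 i

/-- Restriction of a witness family to a subfamily indexed by a finset. -/
lemma UC_of_finset {x : ℝ → ℝ} {z c s t : ℝ} {n : ℕ} (ρ σ : Fin n → ℝ)
    (h1 : ∀ i, s ≤ ρ i ∧ ρ i ≤ σ i ∧ σ i ≤ t)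
    (h2 : ∀ i j : Fin n, i < j → σ i ≤ ρ j)
    (h3 : ∀ i, x (ρ i) ≤ z - c / 2) (h4 : ∀ i, z + c / 2 < x (σ i))
    (K : Finset (Fin n)) {m : ℝ} (hK : ∀ k ∈ K, σ k ≤ m) :
    UC x z c s m K.card := by
  set e := K.orderIsoOfFin rfl with he
  refine ⟨fun i => ρ (e i), fun i => σ (e i), ?_, ?_, fun i => h3 _, fun i => h4 _⟩
  · intro i
    exact ⟨(h1 _).1, (h1 _).2.1, hK _ (e i).2⟩
  · intro i j hij
    exact h2 _ _ (by exact_mod_cast (e.lt_iff_lt.2 hij))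

section Part2
open Filter MeasureTheory
variable {x : ℝ → ℝ} {τ : ℕ → ℝ} {z c : ℝ}

/-- robust crossing count along the grid -/
noncomputable def cnt (x : ℝ → ℝ) (τ : ℕ → ℝ) (z c : ℝ) (j : ℕ) : ℕ :=
  ((Finset.range j).filter (fun i => x (τ i) ≤ z - c / 2 ∧ z + c / 2 < x (τ (i+1)))).card

lemma cnt_succ (x : ℝ → ℝ) (τ : ℕ → ℝ) (z c : ℝ) (j : ℕ) :
    cnt x τ z c (j+1) = cnt x τ z c j +
      (if x (τ j) ≤ z - c / 2 ∧ z + c / 2 < x (τ (j+1)) then 1 else 0) := by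
  classical
  unfold cnt
  rw [Finset.range_add_one, Finset.filter_insert]
  split_ifs with h
  · rw [Finset.card_insert_of_notMem (by simp)]
  · simp

lemma cnt_le_succ (x : ℝ → ℝ) (τ : ℕ → ℝ) (z c : ℝ) (j : ℕ) :
    cnt x τ z c j ≤ cnt x τ z c (j+1) := by
  rw [cnt_succ]; omega

lemma upcross_grid (x : ℝ → ℝ) (τ : ℕ → ℝ) (hτ : Monotone τ) (hτ0 : τ 0 = 0)
    (hpm : ∀ j, MonotoneOn x (Set.Icc (τ j) (τ (j+1))) ∨ AntitoneOn x (Set.Icc (τ j) (τ (j+1))))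
    (z c : ℝ) (hc : 0 < c)
    (hsep : ∀ j, x (τ j) ≤ z - c / 2 ∨ z + c / 2 < x (τ j)) :
    ∀ j, UC x z c 0 (τ j) (cnt x τ z c j) ∧
      (∀ n, UC x z c 0 (τ j) n → n ≤ cnt x τ z c j) := by
  intro j
  induction j with
  | zero =>
    constructor
    · have : cnt x τ z c 0 = 0 := by simp [cnt]
      rw [this]; exact UC_zero x z c 0 (τ 0)
    · intro n hn
      rcases Nat.eq_zero_or_pos n with rfl | hpos
      · exact Nat.zero_le _
      · exfalso
        obtain ⟨ρ, σ, h1, h2, h3, h4⟩ := hn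
        set i : Fin n := ⟨0, hpos⟩
        have hb := h1 i
        rw [hτ0] at hb
        have hρ : ρ i = 0 := le_antisymm (le_trans hb.2.1 hb.2.2) hb.1
        have hσ : σ i = 0 := le_antisymm hb.2.2 (le_trans hb.1 hb.2.1)
        have e3 := h3 i; have e4 := h4 i
        rw [hρ] at e3; rw [hσ] at e4
        linarith
  | succ j ih =>
    obtain ⟨Hach, Hub⟩ := ih
    have hτj0 : (0:ℝ) ≤ τ j := hτ0 ▸ hτ (Nat.zero_le j)
    have hmb : τ j ≤ τ (j+1) := hτ (Nat.le_succ j)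
    constructor
    · rw [cnt_succ]
      by_cases hcond : x (τ j) ≤ z - c/2 ∧ z + c/2 < x (τ (j+1))
      · rw [if_pos hcond]
        exact UC_append Hach le_rfl hmb le_rfl hτj0 hcond.1 hcond.2
      · rw [if_neg hcond, Nat.add_zero]
        exact UC_mono_t hmb Hach
    · intro n hn
      obtain ⟨ρ, σ, h1, h2, h3, h4⟩ := hn
      classical
      set m := τ j with hm
      set b := τ (j+1) with hb
      set A : Finset (Fin n) := Finset.univ.filter (fun k => σ k ≤ m) with hA
      set B : Finset (Fin n) := Finset.univ.filter (fun k => ρ k ≤ m ∧ m < σ k) with hB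
      set C : Finset (Fin n) := Finset.univ.filter (fun k => m < ρ k) with hC
      have hρσ : ∀ k : Fin n, ρ k ≤ σ k := fun k => (h1 k).2.1
      have hσb : ∀ k : Fin n, σ k ≤ b := fun k => (h1 k).2.2
      have hmemρ : ∀ k : Fin n, m < ρ k → ρ k ∈ Set.Icc m b :=
        fun k hk => ⟨hk.le, le_trans (hρσ k) (hσb k)⟩
      have hmemσ : ∀ k : Fin n, m < σ k → σ k ∈ Set.Icc m b :=
        fun k hk => ⟨hk.le, hσb k⟩
      have hmIcc : m ∈ Set.Icc m b := ⟨le_rfl, hmb⟩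
      have hbIcc : b ∈ Set.Icc m b := ⟨hmb, le_rfl⟩
      have hcover : n ≤ A.card + B.card + C.card := by
        have hsub : (Finset.univ : Finset (Fin n)) ⊆ A ∪ B ∪ C := by
          intro k _
          simp only [hA, hB, hC, Finset.mem_union, Finset.mem_filter, Finset.mem_univ, true_and]
          rcases le_or_gt (σ k) m with h | h
          · exact Or.inl (Or.inl h)
          rcases le_or_gt (ρ k) m with h' | h'
          · exact Or.inl (Or.inr ⟨h', h⟩)
          · exact Or.inr h'
        calc n = (Finset.univ : Finset (Fin n)).card := by simp
        _ ≤ (A ∪ B ∪ C).card := Finset.card_le_card hsub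
        _ ≤ (A ∪ B).card + C.card := Finset.card_union_le _ _
        _ ≤ A.card + B.card + C.card :=
            Nat.add_le_add_right (Finset.card_union_le _ _) _
      have hAmem : ∀ k ∈ A, σ k ≤ m := fun k hk => (Finset.mem_filter.1 hk).2
      have hAle : A.card ≤ cnt x τ z c j :=
        Hub _ (UC_of_finset ρ σ h1 h2 h3 h4 A hAmem)
      have hantiC : AntitoneOn x (Set.Icc m b) → C = ∅ := by
        intro hanti
        refine Finset.eq_empty_of_forall_notMem fun k hk => ?_
        have hk' : m < ρ k := (Finset.mem_filter.1 hk).2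
        have := hanti (hmemρ k hk') (hmemσ k (lt_of_lt_of_le hk' (hρσ k))) (hρσ k)
        have e3 := h3 k; have e4 := h4 k
        linarith
      rcases Finset.eq_empty_or_nonempty B with hBe | ⟨k₀, hk₀⟩
      · -- no straddler
        rcases hpm j with hmono | hanti
        · rcases Finset.eq_empty_or_nonempty C with hCe | ⟨k₁, hk₁⟩
          · have : n ≤ A.card := by
              rw [hBe, hCe] at hcover; simpa using hcover
            exact le_trans (le_trans this hAle) (cnt_le_succ x τ z c j)
          · -- cond holds, C.card ≤ 1
            have hk₁' : m < ρ k₁ := (Finset.mem_filter.1 hk₁).2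
            have hcond : x (τ j) ≤ z - c/2 ∧ z + c/2 < x (τ (j+1)) := by
              constructor
              · have := hmono hmIcc (hmemρ k₁ hk₁') hk₁'.le
                have := h3 k₁; linarith
              · have := hmono (hmemσ k₁ (lt_of_lt_of_le hk₁' (hρσ k₁))) hbIcc (hσb k₁)
                have := h4 k₁; linarith
            have hCone : C.card ≤ 1 := by
              refine Finset.card_le_one.2 fun k hk k' hk' => ?_
              have hkm : m < ρ k := (Finset.mem_filter.1 hk).2
              have hkm' : m < ρ k' := (Finset.mem_filter.1 hk').2
              by_contra hne
              rcases lt_or_gt_of_ne hne with hlt | hlt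
              · have hord := h2 k k' hlt
                have := hmono (hmemσ k (lt_of_lt_of_le hkm (hρσ k))) (hmemρ k' hkm') hord
                have := h4 k; have := h3 k'; linarith
              · have hord := h2 k' k hlt
                have := hmono (hmemσ k' (lt_of_lt_of_le hkm' (hρσ k'))) (hmemρ k hkm) hord
                have := h4 k'; have := h3 k; linarith
            rw [cnt_succ, if_pos hcond]
            rw [hBe] at hcover
            simp only [Finset.card_empty, Nat.add_zero] at hcover
            omega
        · have hCe := hantiC hanti
          have : n ≤ A.card := by
            rw [hBe, hCe] at hcover; simpa using hcover
          exact le_trans (le_trans this hAle) (cnt_le_succ x τ z c j)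
      · -- straddler k₀
        have hk₀m : ρ k₀ ≤ m := (Finset.mem_filter.1 hk₀).2.1
        have hk₀σ : m < σ k₀ := (Finset.mem_filter.1 hk₀).2.2
        have hBone : B.card ≤ 1 := by
          refine Finset.card_le_one.2 fun k hk k' hk' => ?_
          have h1k := (Finset.mem_filter.1 hk).2
          have h1k' := (Finset.mem_filter.1 hk').2
          by_contra hne
          rcases lt_or_gt_of_ne hne with hlt | hlt
          · have := h2 k k' hlt
            have := h1k.2; have := h1k'.1; linarith
          · have := h2 k' k hlt
            have := h1k'.2; have := h1k.1; linarith
        rcases hsep j with hxm | hxm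
        · -- x m ≤ z - c/2 : must be monotone piece, cond holds, C empty
          have hmono : MonotoneOn x (Set.Icc m b) := by
            rcases hpm j with hmono | hanti
            · exact hmono
            · exfalso
              have := hanti hmIcc (hmemσ k₀ hk₀σ) hk₀σ.le
              have := h4 k₀; linarith
          have hcond : x (τ j) ≤ z - c/2 ∧ z + c/2 < x (τ (j+1)) := by
            refine ⟨hxm, ?_⟩
            have := hmono (hmemσ k₀ hk₀σ) hbIcc (hσb k₀)
            have := h4 k₀; linarith
          have hCe : C = ∅ := by
            refine Finset.eq_empty_of_forall_notMem fun k hk => ?_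
            have hkm : m < ρ k := (Finset.mem_filter.1 hk).2
            rcases lt_trichotomy k k₀ with hlt | rfl | hlt
            · have := h2 k k₀ hlt
              have := hρσ k; linarith
            · linarith
            · have hord := h2 k₀ k hlt
              have := hmono (hmemσ k₀ hk₀σ) (hmemρ k (lt_of_lt_of_le hk₀σ hord)) hord
              have := h4 k₀; have := h3 k; linarith
          rw [cnt_succ, if_pos hcond]
          rw [hCe] at hcover
          simp only [Finset.card_empty, Nat.add_zero] at hcover
          omega
        · -- z + c/2 < x m : straddler converts, A.card + 1 ≤ cnt j, C empty
          have hAk : ∀ k ∈ A, σ k ≤ ρ k₀ := by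
            intro k hk
            have hkσ : σ k ≤ m := hAmem k hk
            rcases lt_trichotomy k k₀ with hlt | rfl | hlt
            · exact h2 k k₀ hlt
            · linarith
            · exfalso
              have := h2 k₀ k hlt
              have := hρσ k; linarith
          have hUC : UC x z c 0 (ρ k₀) A.card := UC_of_finset ρ σ h1 h2 h3 h4 A hAk
          have hUC2 : UC x z c 0 m (A.card + 1) :=
            UC_append hUC le_rfl hk₀m le_rfl (h1 k₀).1 (h3 k₀) hxm
          have hA1 : A.card + 1 ≤ cnt x τ z c j := Hub _ hUC2
          have hCe : C = ∅ := by
            rcases hpm j with hmono | hanti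
            · refine Finset.eq_empty_of_forall_notMem fun k hk => ?_
              have hkm : m < ρ k := (Finset.mem_filter.1 hk).2
              have := hmono hmIcc (hmemρ k hkm) hkm.le
              have := h3 k; linarith
            · exact hantiC hanti
          rw [hCe] at hcover
          simp only [Finset.card_empty, Nat.add_zero] at hcover
          have : n ≤ A.card + 1 := by omega
          exact le_trans (le_trans this hA1) (cnt_le_succ x τ z c j)

end Part2

section Part3
open Filter MeasureTheory

lemma levelUpcross_grid (x : ℝ → ℝ) (τ : ℕ → ℝ) (hτ : Monotone τ) (hτ0 : τ 0 = 0)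
    (hpm : ∀ j, MonotoneOn x (Set.Icc (τ j) (τ (j+1))) ∨ AntitoneOn x (Set.Icc (τ j) (τ (j+1))))
    (N : ℕ) (hstab : ∀ j, N ≤ j → τ j = τ N)
    (z : ℝ) (hz : ∀ i, i ≤ N → z ≠ x (τ i)) :
    levelUpcross x z 0 (τ N) =
      ((((Finset.range N).filter (fun i => x (τ i) < z ∧ z < x (τ (i+1)))).card : ℕ) : ℝ≥0∞) := by
  classical
  set CNT := ((Finset.range N).filter (fun i => x (τ i) < z ∧ z < x (τ (i+1)))).card with hCNT
  -- positive separation from all grid values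
  obtain ⟨d, hd, hd2⟩ : ∃ d : ℝ, 0 < d ∧ ∀ j, d ≤ |z - x (τ j)| := by
    set s := (Finset.range (N+1)).image (fun i => |z - x (τ i)|) with hs
    have hne : s.Nonempty := ⟨|z - x (τ 0)|, Finset.mem_image_of_mem _ (by simp)⟩
    refine ⟨s.min' hne, ?_, ?_⟩
    · rcases Finset.mem_image.1 (s.min'_mem hne) with ⟨i, hi, hval⟩
      rw [← hval]
      have : z ≠ x (τ i) := hz i (by simpa using Nat.lt_succ_iff.1 (Finset.mem_range.1 hi))
      exact abs_pos.2 (sub_ne_zero.2 this)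
    · intro j
      rcases le_or_gt j N with hj | hj
      · exact Finset.min'_le _ _ (Finset.mem_image_of_mem _ (Finset.mem_range.2 (Nat.lt_succ_of_le hj)))
      · rw [hstab j hj.le]
        exact Finset.min'_le _ _ (Finset.mem_image_of_mem _ (Finset.mem_range.2 (Nat.lt_succ_self N)))
  have key : ∀ c : ℝ, 0 < c → c ≤ d → upcross x z c 0 (τ N) = (CNT : ℝ≥0∞) := by
    intro c hc hcd
    have hsep : ∀ j, x (τ j) ≤ z - c / 2 ∨ z + c / 2 < x (τ j) := by
      intro j
      have := hd2 j
      rcases le_or_gt (x (τ j)) z with h | h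
      · left
        have : c ≤ z - x (τ j) := le_trans hcd (le_trans this (le_of_eq (abs_of_nonneg (by linarith))))
        linarith
      · right
        have : c ≤ x (τ j) - z := le_trans hcd (le_trans this (le_of_eq (by rw [abs_of_nonpos (by linarith)]; ring)))
        linarith
    obtain ⟨hach, hub⟩ := upcross_grid x τ hτ hτ0 hpm z c hc hsep N
    have hcnt : cnt x τ z c N = CNT := by
      unfold cnt
      rw [hCNT]
      congr 1
      apply Finset.filter_congr
      intro i hi
      have h1 := hsep i
      have h2 := hsep (i+1)
      constructor
      · rintro ⟨ha, hb⟩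
        exact ⟨by linarith, by linarith⟩
      · rintro ⟨ha, hb⟩
        constructor
        · rcases h1 with h | h
          · exact h
          · exfalso; linarith
        · rcases h2 with h | h
          · exfalso; linarith
          · exact h
    rw [← hcnt]
    exact upcross_eq_of_UC hach hub
  refine le_antisymm ?_ ?_
  · refine iSup₂_le fun c hc => ?_
    calc upcross x z c 0 (τ N) ≤ upcross x z (min c d) 0 (τ N) :=
          upcross_anti_c (min_le_left _ _)
    _ = (CNT : ℝ≥0∞) := key _ (lt_min hc hd) (min_le_right _ _)
  · rw [← key d hd le_rfl]
    exact le_iSup₂_of_le d hd le_rfl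

end Part3
section Part4
open Filter MeasureTheory Set

lemma fin_telescope {n : ℕ} (f : Fin (n+1) → ℝ) :
    ∑ i : Fin n, (f i.succ - f i.castSucc) = f (Fin.last n) - f 0 := by
  induction n with
  | zero => simp
  | succ n ih =>
    rw [Fin.sum_univ_castSucc]
    have h := ih (fun i => f i.castSucc)
    simp only [← Fin.succ_castSucc] at h
    rw [h, Fin.castSucc_zero, Fin.succ_last]
    ring

lemma monotone_two_pt {a b : ℝ} (hab : a ≤ b) :
    Monotone (fun i : Fin 2 => if i = 0 then a else b) := by
  intro i j hij
  fin_cases i <;> fin_cases j <;> simp_all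

lemma upVar_witness_le {x : ℝ → ℝ} {s₀ a : ℝ} {n : ℕ} {u : Fin (n+1) → ℝ}
    (hu : Monotone u) (h0 : u 0 = s₀) (hl : u (Fin.last n) = a) :
    (∑ i : Fin n, ENNReal.ofReal (x (u i.succ) - x (u i.castSucc))) ≤ upVar x s₀ a :=
  le_iSup_of_le n (le_iSup_of_le u (le_iSup_of_le hu (le_iSup_of_le h0
    (le_iSup_of_le hl le_rfl))))

lemma upVar_le_two_pt {x : ℝ → ℝ} {a b : ℝ} (hab : a ≤ b) :
    ENNReal.ofReal (x b - x a) ≤ upVar x a b := by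
  have h := upVar_witness_le (x := x) (s₀ := a) (a := b) (u := fun i : Fin 2 => if i = 0 then a else b)
    (monotone_two_pt hab) (by simp)
    (show (fun i : Fin 2 => if i = 0 then a else b) (Fin.last 1) = b by norm_num [Fin.last])
  rw [Fin.sum_univ_one] at h
  simpa using h

lemma upVar_piece {x : ℝ → ℝ} {a b : ℝ} (hab : a ≤ b)
    (h : MonotoneOn x (Set.Icc a b) ∨ AntitoneOn x (Set.Icc a b)) :
    upVar x a b = ENNReal.ofReal (x b - x a) := by
  apply le_antisymm
  · refine iSup_le fun n => iSup_le fun u => iSup_le fun hu => iSup_le fun h0 => iSup_le fun hl => ?_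
    have hmem : ∀ i : Fin (n+1), u i ∈ Set.Icc a b := fun i =>
      ⟨h0 ▸ hu (Fin.zero_le i), hl ▸ hu (Fin.le_last i)⟩
    have hstep : ∀ i : Fin n, u i.castSucc ≤ u i.succ := fun i => hu (Fin.castSucc_le_succ i)
    rcases h with hm | ha
    · have key : ∀ i ∈ Finset.univ, 0 ≤ x (u i.succ) - x (u (Fin.castSucc i)) := fun i _ =>
        sub_nonneg.2 (hm (hmem _) (hmem _) (hstep i))
      rw [← ENNReal.ofReal_sum_of_nonneg key, fin_telescope (fun i => x (u i)), h0, hl]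
    · have key : ∀ i : Fin n, ENNReal.ofReal (x (u i.succ) - x (u i.castSucc)) = 0 := fun i =>
        ENNReal.ofReal_eq_zero.2 (sub_nonpos.2 (ha (hmem _) (hmem _) (hstep i)))
      simp only [key, Finset.sum_const_zero]
      exact zero_le
  · exact upVar_le_two_pt hab

lemma upVar_le_add {x : ℝ → ℝ} {s m t : ℝ} (hsm : s ≤ m) (hmt : m ≤ t) :
    upVar x s t ≤ upVar x s m + upVar x m t := by
  refine iSup_le fun n => iSup_le fun u => iSup_le fun hu => iSup_le fun h0 => iSup_le fun hl => ?_
  have key : ∀ i : Fin n, ENNReal.ofReal (x (u i.succ) - x (u i.castSucc)) ≤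
      ENNReal.ofReal (x (min (u i.succ) m) - x (min (u i.castSucc) m)) +
      ENNReal.ofReal (x (max (u i.succ) m) - x (max (u i.castSucc) m)) := by
    intro i
    have hstep : u i.castSucc ≤ u i.succ := hu (Fin.castSucc_le_succ i)
    rcases le_total (u i.succ) m with h1 | h1
    · rw [min_eq_left h1, min_eq_left (le_trans hstep h1), max_eq_right h1,
        max_eq_right (le_trans hstep h1)]
      simp
    · rcases le_total m (u i.castSucc) with h2 | h2
      · rw [min_eq_right h2, min_eq_right (le_trans h2 hstep), max_eq_left h2,
          max_eq_left (le_trans h2 hstep)]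
        simp
      · rw [min_eq_right h1, min_eq_left h2, max_eq_left h1, max_eq_right h2]
        have heq : x (u i.succ) - x (u i.castSucc) =
            (x m - x (u i.castSucc)) + (x (u i.succ) - x m) := by ring
        rw [heq]
        exact ENNReal.ofReal_add_le
  calc ∑ i : Fin n, ENNReal.ofReal (x (u i.succ) - x (u i.castSucc))
      ≤ ∑ i : Fin n, (ENNReal.ofReal (x (min (u i.succ) m) - x (min (u i.castSucc) m)) +
        ENNReal.ofReal (x (max (u i.succ) m) - x (max (u i.castSucc) m))) :=
        Finset.sum_le_sum fun i _ => key i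
  _ = (∑ i : Fin n, ENNReal.ofReal (x (min (u i.succ) m) - x (min (u i.castSucc) m))) +
      ∑ i : Fin n, ENNReal.ofReal (x (max (u i.succ) m) - x (max (u i.castSucc) m)) :=
        Finset.sum_add_distrib
  _ ≤ upVar x s m + upVar x m t := by
      gcongr
      · exact upVar_witness_le (fun i j hij => min_le_min (hu hij) le_rfl)
          (by rw [h0, min_eq_left hsm]) (by rw [hl, min_eq_right hmt])
      · exact upVar_witness_le (fun i j hij => max_le_max (hu hij) le_rfl)
          (by rw [h0, max_eq_right hsm]) (by rw [hl, max_eq_left hmt])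

lemma monotone_snoc {n : ℕ} {u : Fin (n+1) → ℝ} (hu : Monotone u) {s : ℝ}
    (hs : u (Fin.last n) ≤ s) : Monotone (Fin.snoc u s : Fin (n+2) → ℝ) := by
  intro i j hij
  rcases Fin.eq_castSucc_or_eq_last j with ⟨j', rfl⟩ | rfl
  · have hi : i ≠ Fin.last (n+1) := by
      intro h; rw [h] at hij
      exact absurd (lt_of_le_of_lt hij (Fin.castSucc_lt_last j')) (lt_irrefl _)
    obtain ⟨i', rfl⟩ := Fin.exists_castSucc_eq.2 hi
    rw [Fin.snoc_castSucc, Fin.snoc_castSucc]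
    exact hu (Fin.castSucc_le_castSucc_iff.1 hij)
  · rw [Fin.snoc_last]
    rcases Fin.eq_castSucc_or_eq_last i with ⟨i', rfl⟩ | rfl
    · rw [Fin.snoc_castSucc]
      exact le_trans (hu (Fin.le_last i')) hs
    · rw [Fin.snoc_last]

lemma sum_snoc {n : ℕ} (x : ℝ → ℝ) (u : Fin (n+1) → ℝ) (s : ℝ) :
    ∑ i : Fin (n+1), ENNReal.ofReal (x ((Fin.snoc u s : Fin (n+2) → ℝ) i.succ) -
      x ((Fin.snoc u s : Fin (n+2) → ℝ) i.castSucc))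
    = (∑ i : Fin n, ENNReal.ofReal (x (u i.succ) - x (u i.castSucc)))
      + ENNReal.ofReal (x s - x (u (Fin.last n))) := by
  rw [Fin.sum_univ_castSucc]
  congr 1
  · apply Finset.sum_congr rfl
    intro i _
    simp only [Fin.succ_castSucc, Fin.snoc_castSucc]
  · simp only [Fin.succ_last, Fin.snoc_last, Fin.snoc_castSucc]

lemma upVar_snoc {x : ℝ → ℝ} {s₀ a s : ℝ} (h0a : s₀ ≤ a) (has : a ≤ s) :
    upVar x s₀ a + ENNReal.ofReal (x s - x a) ≤ upVar x s₀ s := by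
  set c := ENNReal.ofReal (x s - x a) with hcdef
  have hcne : c ≠ ⊤ := ENNReal.ofReal_ne_top
  have key : ∀ (n : ℕ) (u : Fin (n+1) → ℝ), Monotone u → u 0 = s₀ → u (Fin.last n) = a →
      (∑ i : Fin n, ENNReal.ofReal (x (u i.succ) - x (u i.castSucc))) + c ≤ upVar x s₀ s := by
    intro n u hu h0 hl
    have hmono := monotone_snoc hu (hl ▸ has)
    have h0' : (Fin.snoc u s : Fin (n+2) → ℝ) 0 = s₀ := by
      rw [← Fin.castSucc_zero, Fin.snoc_castSucc, h0]
    have hl' : (Fin.snoc u s : Fin (n+2) → ℝ) (Fin.last (n+1)) = s := Fin.snoc_last _ _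
    have h := upVar_witness_le (x := x) hmono h0' hl'
    rw [sum_snoc, hl] at h
    exact h
  have hcd : c ≤ upVar x s₀ s := by
    have h2 := key 1 (fun i => if i = 0 then s₀ else a) (monotone_two_pt h0a) (by simp)
      (by norm_num [Fin.last])
    exact le_trans le_add_self h2
  have hmain : upVar x s₀ a ≤ upVar x s₀ s - c := by
    refine iSup_le fun n => iSup_le fun u => iSup_le fun hu => iSup_le fun h0 => iSup_le fun hl => ?_
    rw [(ENNReal.cancel_of_ne hcne).le_tsub_iff_right hcd]
    exact key n u hu h0 hl
  calc upVar x s₀ a + c ≤ (upVar x s₀ s - c) + c := by gcongr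
  _ = upVar x s₀ s := tsub_add_cancel_of_le hcd

lemma upVar_split_piece {x : ℝ → ℝ} {s₀ m s : ℝ} (h0m : s₀ ≤ m) (hms : m ≤ s)
    (hpiece : MonotoneOn x (Set.Icc m s) ∨ AntitoneOn x (Set.Icc m s)) :
    upVar x s₀ s = upVar x s₀ m + ENNReal.ofReal (x s - x m) := by
  refine le_antisymm ?_ (upVar_snoc h0m hms)
  calc upVar x s₀ s ≤ upVar x s₀ m + upVar x m s := upVar_le_add h0m hms
  _ = upVar x s₀ m + ENNReal.ofReal (x s - x m) := by rw [upVar_piece hms hpiece]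

end Part4

section Part5A
open Filter MeasureTheory Set Function

variable (f : StieltjesFunction ℝ) {a b : ℝ}

/-- generalized inverse adapted to `[a,b]` -/
noncomputable def SInv (f : StieltjesFunction ℝ) (a b : ℝ) (z : ℝ) : ℝ :=
  sInf ({u | u ∈ Set.Icc a b ∧ z ≤ f u} ∪ {b})

lemma SInv_bddBelow (hab : a ≤ b) (z : ℝ) :
    BddBelow ({u | u ∈ Set.Icc a b ∧ z ≤ f u} ∪ {b}) := by
  refine ⟨a, fun u hu => ?_⟩
  rcases hu with hu | hu
  · exact hu.1.1
  · rw [Set.mem_singleton_iff] at hu; rw [hu]; exact hab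

lemma SInv_nonempty (z : ℝ) : ({u | u ∈ Set.Icc a b ∧ z ≤ f u} ∪ {b}).Nonempty :=
  ⟨b, Or.inr rfl⟩

lemma SInv_mono (hab : a ≤ b) : Monotone (SInv f a b) := by
  intro z z' hzz
  apply csInf_le_csInf (SInv_bddBelow f hab z) (SInv_nonempty f z')
  intro u hu
  rcases hu with hu | hu
  · exact Or.inl ⟨hu.1, le_trans hzz hu.2⟩
  · exact Or.inr hu

lemma SInv_le_b (hab : a ≤ b) (z : ℝ) : SInv f a b z ≤ b :=
  csInf_le (SInv_bddBelow f hab z) (Or.inr rfl)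

lemma le_SInv (hab : a ≤ b) (z : ℝ) : a ≤ SInv f a b z := by
  refine le_csInf (SInv_nonempty f z) fun u hu => ?_
  rcases hu with hu | hu
  · exact hu.1.1
  · rw [Set.mem_singleton_iff] at hu; rw [hu]; exact hab

lemma le_f_SInv (hab : a ≤ b) {z : ℝ} (hz : z ∈ Set.Ioc (f a) (f b)) :
    z ≤ f (SInv f a b z) := by
  by_contra h
  push_neg at h
  have hev : ∀ᶠ u in nhdsWithin (SInv f a b z) (Set.Ici (SInv f a b z)), f u < z :=
    ((f.right_continuous _).tendsto).eventually_lt_const h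
  obtain ⟨u', hu', hsub⟩ := mem_nhdsGE_iff_exists_Ico_subset.1 hev
  obtain ⟨w, hw, hwu⟩ := (csInf_lt_iff (SInv_bddBelow f hab z) (SInv_nonempty f z)).1 hu'
  have hwlo : SInv f a b z ≤ w := by
    rcases hw with hw | hw
    · exact csInf_le (SInv_bddBelow f hab z) (Or.inl hw)
    · rw [Set.mem_singleton_iff] at hw; rw [hw]; exact SInv_le_b f hab z
  have hfw : f w < z := hsub ⟨hwlo, hwu⟩
  rcases hw with hw | hw
  · exact absurd hw.2 (not_le.2 hfw)
  · rw [Set.mem_singleton_iff] at hw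
    rw [hw] at hfw
    exact absurd hz.2 (not_le.2 hfw)

lemma a_lt_SInv (hab : a ≤ b) {z : ℝ} (hz : z ∈ Set.Ioc (f a) (f b)) :
    a < SInv f a b z := by
  rcases lt_or_eq_of_le (le_SInv f hab z) with h | h
  · exact h
  · exfalso
    have := le_f_SInv f hab hz
    rw [← h] at this
    exact absurd hz.1 (not_lt.2 this)

lemma SInv_galois (hab : a ≤ b) {z : ℝ} (hz : z ∈ Set.Ioc (f a) (f b))
    {u : ℝ} (hu : u ∈ Set.Icc a b) : SInv f a b z ≤ u ↔ z ≤ f u := by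
  constructor
  · intro h
    exact le_trans (le_f_SInv f hab hz) (f.mono h)
  · intro h
    exact csInf_le (SInv_bddBelow f hab z) (Or.inl ⟨hu, h⟩)

lemma SInv_galois_clamp (hab : a ≤ b) {z : ℝ} (hz : z ∈ Set.Ioc (f a) (f b))
    (u : ℝ) : SInv f a b z ≤ u ↔ z ≤ f (max a (min u b)) := by
  rcases lt_or_ge u a with h | h
  · constructor
    · intro h'
      exact absurd (lt_of_le_of_lt h' h) (not_lt.2 (le_SInv f hab z))
    · intro h'
      rcases le_or_gt u b with h2 | h2
      · rw [min_eq_left h2, max_eq_left (le_of_lt h)] at h'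
        exact absurd hz.1 (not_lt.2 h')
      · exfalso; linarith
  · rcases le_or_gt u b with h2 | h2
    · rw [min_eq_left h2, max_eq_right h]
      exact SInv_galois f hab hz ⟨h, h2⟩
    · rw [min_eq_right (le_of_lt h2), max_eq_right hab]
      constructor
      · intro _
        exact hz.2
      · intro _
        exact le_trans (SInv_le_b f hab z) (le_of_lt h2)

lemma leftLim_SInv_le (hab : a ≤ b) {z : ℝ} (hz : z ∈ Set.Ioc (f a) (f b)) :
    Function.leftLim f (SInv f a b z) ≤ z := by
  set Ψ := SInv f a b z with hΨ
  have haΨ : a < Ψ := a_lt_SInv f hab hz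
  have hev : ∀ᶠ u in nhdsWithin Ψ (Set.Iio Ψ), f u ≤ z := by
    filter_upwards [Ioo_mem_nhdsLT_of_mem (show Ψ ∈ Set.Ioc a Ψ from ⟨haΨ, le_rfl⟩)] with u hu
    by_contra h
    push_neg at h
    have : Ψ ≤ u := (SInv_galois f hab hz ⟨hu.1.le, le_trans hu.2.le (SInv_le_b f hab z)⟩).2 h.le
    exact absurd hu.2 (not_lt.2 this)
  exact le_of_tendsto (f.mono.tendsto_leftLim Ψ) hev

lemma SInv_measurable (hab : a ≤ b) : Measurable (SInv f a b) :=
  (SInv_mono f hab).measurable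

lemma SInv_map (hab : a ≤ b) :
    Measure.map (SInv f a b) (volume.restrict (Set.Ioc (f a) (f b))) =
      f.measure.restrict (Set.Ioc a b) := by
  have hΨm := SInv_measurable f hab
  have hfin : IsFiniteMeasure (Measure.map (SInv f a b) (volume.restrict (Set.Ioc (f a) (f b)))) := by
    constructor
    rw [Measure.map_apply hΨm MeasurableSet.univ]
    simp only [Set.preimage_univ]
    rw [Measure.restrict_apply MeasurableSet.univ, Set.univ_inter, Real.volume_Ioc]
    exact ENNReal.ofReal_lt_top
  refine @MeasureTheory.Measure.ext_of_Ioc_finite ℝ _ _ _ _ _ _ _ _ hfin ?_ ?_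
  · rw [Measure.map_apply hΨm MeasurableSet.univ]
    simp only [Set.preimage_univ]
    rw [Measure.restrict_apply MeasurableSet.univ, Measure.restrict_apply MeasurableSet.univ]
    simp only [Set.univ_inter]
    rw [Real.volume_Ioc, StieltjesFunction.measure_Ioc]
  · intro c d hcd
    rw [Measure.map_apply hΨm measurableSet_Ioc,
      Measure.restrict_apply (hΨm measurableSet_Ioc),
      Measure.restrict_apply measurableSet_Ioc]
    have hset : SInv f a b ⁻¹' Set.Ioc c d ∩ Set.Ioc (f a) (f b) =
        Set.Ioc (f (max a (min c b))) (f (max a (min d b))) ∩ Set.Ioc (f a) (f b) := by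
      ext z
      simp only [Set.mem_inter_iff, Set.mem_preimage, Set.mem_Ioc]
      constructor
      · rintro ⟨⟨h1, h2⟩, h3⟩
        refine ⟨⟨?_, ?_⟩, h3⟩
        · by_contra h
          push_neg at h
          have := (SInv_galois_clamp f hab h3 c).2 h
          exact absurd h1 (not_lt.2 this)
        · exact (SInv_galois_clamp f hab h3 d).1 h2
      · rintro ⟨⟨h1, h2⟩, h3⟩
        refine ⟨⟨?_, ?_⟩, h3⟩
        · by_contra h
          push_neg at h
          have := (SInv_galois_clamp f hab h3 c).1 h
          exact absurd h1 (not_lt.2 this)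
        · exact (SInv_galois_clamp f hab h3 d).2 h2
    rw [hset]
    have hfc : f a ≤ f (max a (min c b)) := f.mono (le_max_left _ _)
    have hfd : f (max a (min d b)) ≤ f b := f.mono (max_le hab (min_le_right _ _))
    rw [Set.Ioc_inter_Ioc]
    rw [max_eq_left hfc, min_eq_left hfd, Real.volume_Ioc]
    -- now compare with f.measure (Ioc c d ∩ Ioc a b)
    rw [Set.Ioc_inter_Ioc, StieltjesFunction.measure_Ioc]
    rcases le_or_gt (max c a) (min d b) with hord | hord
    · have hcb : c ≤ b := le_trans (le_max_left c a) (le_trans hord (min_le_right d b))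
      have had : a ≤ d := le_trans (le_max_right c a) (le_trans hord (min_le_left d b))
      have h1 : max a (min c b) = max c a := by
        rw [min_eq_left hcb, max_comm]
      have h2 : max a (min d b) = min d b := max_eq_right (le_trans (le_max_right c a) hord)
      rw [h1, h2]
    · -- degenerate: both sides zero
      have hz1 : f (min d b) - f (max c a) ≤ 0 := sub_nonpos.2 (f.mono hord.le)
      have hz2 : f (max a (min d b)) - f (max a (min c b)) ≤ 0 := by
        apply sub_nonpos.2
        apply f.mono
        rcases le_or_gt a (min d b) with h | h
        · have hmaxca : max c a = c := by
            rcases max_cases c a with ⟨h1, _⟩ | ⟨h1, h2⟩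
            · exact h1
            · exfalso; rw [h1] at hord; exact absurd hord (not_lt.2 h)
          have : min d b ≤ min c b := by
            refine le_min ?_ (min_le_right d b)
            rw [hmaxca] at hord
            exact hord.le
          calc max a (min d b) = min d b := max_eq_right h
          _ ≤ min c b := this
          _ ≤ max a (min c b) := le_max_right _ _
        · calc max a (min d b) = a := max_eq_left h.le
          _ ≤ max a (min c b) := le_max_left _ _
      rw [ENNReal.ofReal_of_nonpos hz1, ENNReal.ofReal_of_nonpos hz2]

end Part5A

section Part5B
open Filter MeasureTheory Set Function

lemma pieceL (f : StieltjesFunction ℝ) {a b : ℝ} (hab : a ≤ b)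
    (g : ℝ → ℝ) (hgm : Measurable g) {M : ℝ} (hM : 0 ≤ M)
    (hgb : ∀ z ∈ Set.Icc (f a) (f b), |g z| ≤ M) :
    (∫ s in Set.Ioc a b, g (Function.leftLim f s) ∂f.measure) +
      ∑' s : {s : ℝ // s ∈ Set.Ioc a b ∧ Function.leftLim f s < f s},
        ∫ z in (Function.leftLim f s.1)..(f s.1), (g z - g (Function.leftLim f s.1)) =
    ∫ z in Set.Ioc (f a) (f b), g z := by
  classical
  set D := Set.Ioc (f a) (f b) with hD
  set J : Set ℝ := {s : ℝ | s ∈ Set.Ioc a b ∧ Function.leftLim f s < f s} with hJ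
  have hJc : J.Countable := by
    apply (f.mono.countable_not_continuousAt).mono
    intro s hs
    simp only [Set.mem_setOf_eq]
    intro hcont
    have : Function.leftLim f s = f s :=
      leftLim_eq_of_tendsto
        (hcont.tendsto.mono_left nhdsWithin_le_nhds)
    rw [hJ] at hs
    exact absurd this (ne_of_lt hs.2)
  haveI hJcc : Countable {s : ℝ // s ∈ Set.Ioc a b ∧ Function.leftLim f s < f s} :=
    Set.Countable.to_subtype hJc
  -- jump membership facts
  have hllb : ∀ s : {s : ℝ // s ∈ Set.Ioc a b ∧ Function.leftLim f s < f s},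
      f a ≤ Function.leftLim f s.1 := fun s => f.mono.le_leftLim s.2.1.1
  have hfub : ∀ s : {s : ℝ // s ∈ Set.Ioc a b ∧ Function.leftLim f s < f s},
      (f s.1 : ℝ) ≤ f b := fun s => f.mono s.2.1.2
  have hgapsub : ∀ s : {s : ℝ // s ∈ Set.Ioc a b ∧ Function.leftLim f s < f s},
      Set.Ioc (Function.leftLim f s.1) (f s.1) ⊆ D :=
    fun s => Set.Ioc_subset_Ioc (hllb s) (hfub s)
  set ind : {s : ℝ // s ∈ Set.Ioc a b ∧ Function.leftLim f s < f s} → ℝ → ℝ :=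
    fun s => Set.indicator (Set.Ioc (Function.leftLim f s.1) (f s.1))
      (fun z => g z - g (Function.leftLim f s.1)) with hind
  have hindm : ∀ s, Measurable (ind s) := fun s =>
    (hgm.sub measurable_const).indicator measurableSet_Ioc
  -- rewrite each jump integral
  have h2 : ∀ s : {s : ℝ // s ∈ Set.Ioc a b ∧ Function.leftLim f s < f s},
      (∫ z in (Function.leftLim f s.1)..(f s.1), (g z - g (Function.leftLim f s.1)))
        = ∫ z in D, ind s z := by
    intro s
    rw [intervalIntegral.integral_of_le s.2.2.le, hind]
    rw [MeasureTheory.integral_indicator measurableSet_Ioc,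
      Measure.restrict_restrict measurableSet_Ioc,
      Set.inter_eq_self_of_subset_left (hgapsub s)]
  -- lintegral bound
  have hlint : ∀ s : {s : ℝ // s ∈ Set.Ioc a b ∧ Function.leftLim f s < f s},
      (∫⁻ z, ‖ind s z‖₊ ∂(volume.restrict D)) ≤
        ENNReal.ofReal (2*M) * f.measure {s.1} := by
    intro s
    rw [StieltjesFunction.measure_singleton]
    have hptb : ∀ z, (‖ind s z‖₊ : ℝ≥0∞) ≤
        Set.indicator (Set.Ioc (Function.leftLim f s.1) (f s.1))
          (fun _ => ENNReal.ofReal (2*M)) z := by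
      intro z
      by_cases hz : z ∈ Set.Ioc (Function.leftLim f s.1) (f s.1)
      · rw [Set.indicator_of_mem hz, hind]
        simp only [Set.indicator_of_mem hz]
        rw [← enorm_eq_nnnorm, Real.enorm_eq_ofReal_abs]
        apply ENNReal.ofReal_le_ofReal
        have hz1 : z ∈ Set.Icc (f a) (f b) := Set.mem_Icc_of_Ioc (hgapsub s hz)
        have hz2 : Function.leftLim f s.1 ∈ Set.Icc (f a) (f b) :=
          ⟨hllb s, le_trans s.2.2.le (hfub s)⟩
        calc |g z - g (Function.leftLim f s.1)| ≤ |g z| + |g (Function.leftLim f s.1)| :=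
          abs_sub _ _
        _ ≤ M + M := add_le_add (hgb z hz1) (hgb _ hz2)
        _ = 2*M := by ring
      · rw [Set.indicator_of_notMem hz, hind]
        simp only [Set.indicator_of_notMem hz]
        simp
    calc (∫⁻ z, ‖ind s z‖₊ ∂(volume.restrict D)) ≤
        ∫⁻ z, Set.indicator (Set.Ioc (Function.leftLim f s.1) (f s.1))
          (fun _ => ENNReal.ofReal (2*M)) z ∂(volume.restrict D) :=
        lintegral_mono hptb
    _ = ENNReal.ofReal (2*M) * (volume.restrict D) (Set.Ioc (Function.leftLim f s.1) (f s.1)) :=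
        lintegral_indicator_const measurableSet_Ioc _
    _ = ENNReal.ofReal (2*M) * ENNReal.ofReal (f s.1 - Function.leftLim f s.1) := by
        rw [Measure.restrict_apply measurableSet_Ioc,
          Set.inter_eq_self_of_subset_left (hgapsub s), Real.volume_Ioc]
  have hsum_fin : ∑' s : {s : ℝ // s ∈ Set.Ioc a b ∧ Function.leftLim f s < f s},
      ENNReal.ofReal (2*M) * f.measure {s.1} ≠ ⊤ := by
    rw [ENNReal.tsum_mul_left]
    apply ENNReal.mul_ne_top ENNReal.ofReal_ne_top
    have huni : (∑' s : {s : ℝ // s ∈ Set.Ioc a b ∧ Function.leftLim f s < f s},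
        f.measure {s.1}) = f.measure J := by
      rw [← MeasureTheory.measure_iUnion ?_ (fun s => measurableSet_singleton _)]
      · congr 1
        exact Set.iUnion_of_singleton_coe J
      · intro s t hst
        simp only [Set.disjoint_singleton]
        exact fun h => hst (Subtype.ext h)
    rw [huni]
    have : f.measure J ≤ f.measure (Set.Ioc a b) := measure_mono (fun s hs => hs.1)
    refine ne_top_of_le_ne_top ?_ this
    rw [StieltjesFunction.measure_Ioc]
    exact ENNReal.ofReal_ne_top
  have hex : (∑' s : {s : ℝ // s ∈ Set.Ioc a b ∧ Function.leftLim f s < f s},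
      ∫ z in D, ind s z) = ∫ z in D, (∑' s, ind s z) := by
    refine (MeasureTheory.integral_tsum (fun s => (hindm s).aestronglyMeasurable) ?_).symm
    exact ne_top_of_le_ne_top hsum_fin (ENNReal.tsum_le_tsum hlint)
  -- transfer the Stieltjes integral
  set Φ : ℝ → ℝ := fun z => g (Function.leftLim f (SInv f a b z)) with hΦ
  have hΦm : Measurable Φ :=
    hgm.comp (f.mono.leftLim.measurable.comp (SInv_measurable f hab))
  have h1 : (∫ s in Set.Ioc a b, g (Function.leftLim f s) ∂f.measure) = ∫ z in D, Φ z := by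
    have hcomp : Measurable (fun s : ℝ => g (Function.leftLim f s)) :=
      hgm.comp f.mono.leftLim.measurable
    rw [← SInv_map f hab]
    rw [MeasureTheory.integral_map (SInv_measurable f hab).aemeasurable
      hcomp.aestronglyMeasurable]
  -- pointwise identity
  have hpt : ∀ z ∈ D, Φ z + (∑' s, ind s z) = g z := by
    intro z hz
    by_cases hcase : ∃ s : {s : ℝ // s ∈ Set.Ioc a b ∧ Function.leftLim f s < f s},
        z ∈ Set.Ioc (Function.leftLim f s.1) (f s.1)
    · obtain ⟨s₀, hs₀⟩ := hcase
      have huniq : ∀ s, s ≠ s₀ → ind s z = 0 := by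
        intro s hne
        apply Set.indicator_of_notMem
        intro hmem
        rcases lt_trichotomy s.1 s₀.1 with h | h | h
        · have hh : (f s.1 : ℝ) ≤ Function.leftLim f s₀.1 := f.mono.le_leftLim h
          exact absurd hs₀.1 (not_lt.2 (le_trans hmem.2 hh))
        · exact hne (Subtype.ext h)
        · have hh : (f s₀.1 : ℝ) ≤ Function.leftLim f s.1 := f.mono.le_leftLim h
          exact absurd hmem.1 (not_lt.2 (le_trans hs₀.2 hh))
      rw [tsum_eq_single s₀ huniq]
      have hΨeq : SInv f a b z = s₀.1 := by
        have hle : SInv f a b z ≤ s₀.1 :=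
          (SInv_galois f hab hz ⟨s₀.2.1.1.le, s₀.2.1.2⟩).2 hs₀.2
        have hge : s₀.1 ≤ SInv f a b z := by
          by_contra h
          push_neg at h
          have hh : (f (SInv f a b z) : ℝ) ≤ Function.leftLim f s₀.1 := f.mono.le_leftLim h
          exact absurd hs₀.1 (not_lt.2 (le_trans (le_f_SInv f hab hz) hh))
        linarith
      rw [hΦ]
      simp only [hΨeq]
      rw [hind]
      simp only [Set.indicator_of_mem hs₀]
      ring
    · push_neg at hcase
      have hzero : (∑' s, ind s z) = 0 := by
        have : ∀ s, ind s z = 0 := fun s => Set.indicator_of_notMem (hcase s) _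
        simp [this]
      rw [hzero, add_zero]
      have hll : Function.leftLim f (SInv f a b z) ≤ z := leftLim_SInv_le f hab hz
      have hzf : z ≤ f (SInv f a b z) := le_f_SInv f hab hz
      rcases eq_or_lt_of_le hll with heq | hlt
      · show g (Function.leftLim f (SInv f a b z)) = g z
        rw [heq]
      · exfalso
        have hJmem : SInv f a b z ∈ Set.Ioc a b := ⟨a_lt_SInv f hab hz, SInv_le_b f hab z⟩
        exact hcase ⟨SInv f a b z, hJmem, lt_of_lt_of_le hlt hzf⟩ ⟨hlt, hzf⟩
  -- integrability
  have hIΦ : Integrable Φ (volume.restrict D) := by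
    refine Integrable.mono' (integrable_const M) hΦm.aestronglyMeasurable ?_
    rw [ae_restrict_iff' measurableSet_Ioc]
    apply Filter.Eventually.of_forall
    intro z hz
    rw [Real.norm_eq_abs]
    apply hgb
    constructor
    · exact f.mono.le_leftLim (a_lt_SInv f hab hz)
    · exact le_trans (f.mono.leftLim_le le_rfl) (f.mono (SInv_le_b f hab z))
  have hIg : Integrable g (volume.restrict D) := by
    refine Integrable.mono' (integrable_const M) hgm.aestronglyMeasurable ?_
    rw [ae_restrict_iff' measurableSet_Ioc]
    apply Filter.Eventually.of_forall
    intro z hz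
    rw [Real.norm_eq_abs]
    exact hgb z (Set.mem_Icc_of_Ioc hz)
  have hIT : Integrable (fun z => ∑' s, ind s z) (volume.restrict D) := by
    refine Integrable.congr (hIg.sub hIΦ)
      ((ae_restrict_iff' measurableSet_Ioc).2 (Filter.Eventually.of_forall fun z hz => ?_))
    have := hpt z hz
    simp only [Pi.sub_apply]
    linarith
  rw [h1, tsum_congr h2, hex, ← MeasureTheory.integral_add hIΦ hIT]
  exact MeasureTheory.setIntegral_congr_fun measurableSet_Ioc (fun z hz => hpt z hz)

end Part5B

section Part6
open Filter MeasureTheory Set Function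

/-- Clamp a function monotone on `[a,b]` to a global Stieltjes function. -/
noncomputable def clampStieltjes (x : ℝ → ℝ) (a b : ℝ)
    (hmono : MonotoneOn x (Set.Icc a b)) (hab : a ≤ b)
    (hrc : ∀ u : ℝ, ContinuousWithinAt x (Set.Ici u) u) : StieltjesFunction ℝ where
  toFun := fun u => x (max a (min u b))
  mono' := by
    intro u v huv
    have h1 : max a (min u b) ∈ Set.Icc a b := ⟨le_max_left _ _, max_le hab (min_le_right _ _)⟩
    have h2 : max a (min v b) ∈ Set.Icc a b := ⟨le_max_left _ _, max_le hab (min_le_right _ _)⟩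
    exact hmono h1 h2 (max_le_max le_rfl (min_le_min huv le_rfl))
  right_continuous' := by
    intro u
    have hclamp : Continuous (fun w : ℝ => max a (min w b)) :=
      continuous_const.max (continuous_id.min continuous_const)
    have h1 : ContinuousWithinAt x (Set.Ici (max a (min u b))) (max a (min u b)) := hrc _
    refine ContinuousWithinAt.comp (g := x) (f := fun w : ℝ => max a (min w b))
      (t := Set.Ici (max a (min u b))) h1 hclamp.continuousWithinAt ?_
    intro v hv
    exact max_le_max le_rfl (min_le_min (Set.mem_Ici.1 hv) le_rfl)

lemma clampStieltjes_apply (x : ℝ → ℝ) (a b : ℝ) (hmono : MonotoneOn x (Set.Icc a b))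
    (hab : a ≤ b) (hrc : ∀ u : ℝ, ContinuousWithinAt x (Set.Ici u) u)
    {u : ℝ} (hu : u ∈ Set.Icc a b) :
    clampStieltjes x a b hmono hab hrc u = x u := by
  show x (max a (min u b)) = x u
  rw [min_eq_left hu.2, max_eq_right hu.1]

/-- left limits agree for functions agreeing on a left neighborhood -/
lemma leftLim_congr_left {f g : ℝ → ℝ} {a s : ℝ} (ha : a < s)
    (hfg : Set.EqOn f g (Set.Ioo a s)) {l : ℝ}
    (hg : Tendsto g (nhdsWithin s (Set.Iio s)) (nhds l)) :
    Function.leftLim f s = Function.leftLim g s := by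
  have hev : f =ᶠ[nhdsWithin s (Set.Iio s)] g := by
    filter_upwards [Ioo_mem_nhdsLT_of_mem (show s ∈ Set.Ioc a s from ⟨ha, le_rfl⟩)] with u hu
    exact hfg hu
  have hf : Tendsto f (nhdsWithin s (Set.Iio s)) (nhds l) := hg.congr' hev.symm
  rw [leftLim_eq_of_tendsto hf,
    leftLim_eq_of_tendsto hg]

/-- cadlag functions tend to their left limits -/
lemma cadlag_tendsto_leftLim {x : ℝ → ℝ}
    (hx : ∀ a : ℝ, ∃ l : ℝ, Tendsto x (nhdsWithin a (Set.Iio a)) (nhds l)) (s : ℝ) :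
    Tendsto x (nhdsWithin s (Set.Iio s)) (nhds (Function.leftLim x s)) := by
  obtain ⟨l, hl⟩ := hx s
  rw [leftLim_eq_of_tendsto hl]
  exact hl

/-- covering lemma: points of `Ioc (τ 0) (τ k)` lie in some grid interval -/
lemma grid_cover {τ : ℕ → ℝ} (hτ : Monotone τ) :
    ∀ k s, s ∈ Set.Ioc (τ 0) (τ k) → ∃ j, j < k ∧ s ∈ Set.Ioc (τ j) (τ (j+1)) := by
  intro k
  induction k with
  | zero => intro s hs; exact absurd hs.2 (not_le.2 hs.1)
  | succ k ih =>
    intro s hs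
    rcases le_or_gt s (τ k) with h | h
    · obtain ⟨j, hj, hj2⟩ := ih s ⟨hs.1, h⟩
      exact ⟨j, Nat.lt_succ_of_lt hj, hj2⟩
    · exact ⟨k, Nat.lt_succ_self k, ⟨h, hs.2⟩⟩

/-- antitone pieces have no upward jump (in the half-open piece) -/
lemma antitone_no_up_jump {x : ℝ → ℝ} {a b : ℝ} (hanti : AntitoneOn x (Set.Icc a b))
    (hx : ∀ a : ℝ, ∃ l : ℝ, Tendsto x (nhdsWithin a (Set.Iio a)) (nhds l))
    {s : ℝ} (hs : s ∈ Set.Ioc a b) : x s ≤ Function.leftLim x s := by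
  have hev : ∀ᶠ u in nhdsWithin s (Set.Iio s), x s ≤ x u := by
    filter_upwards [Ioo_mem_nhdsLT_of_mem (show s ∈ Set.Ioc a s from ⟨hs.1, le_rfl⟩)] with u hu
    exact hanti ⟨hu.1.le, le_trans hu.2.le hs.2⟩ ⟨le_trans hu.1.le hu.2.le, hs.2⟩ hu.2.le
  exact ge_of_tendsto (cadlag_tendsto_leftLim hx s) hev

end Part6

section Part7
open Filter MeasureTheory Set Function

variable {x : ℝ → ℝ} {a b : ℝ} (g : ℝ → ℝ)

/-- jump integrand -/
noncomputable def Wfun (x g : ℝ → ℝ) : ℝ → ℝ := fun s =>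
  ∫ z in (Function.leftLim x s)..(x s), (g z - g (Function.leftLim x s))

/-- jump set of a piece -/
def Jset (x : ℝ → ℝ) (a b : ℝ) : Set ℝ :=
  {s : ℝ | s ∈ Set.Ioc a b ∧ Function.leftLim x s < x s}

lemma piece_term_mono
    (hrc : ∀ u : ℝ, ContinuousWithinAt x (Set.Ici u) u)
    (hll : ∀ a : ℝ, ∃ l : ℝ, Tendsto x (nhdsWithin a (Set.Iio a)) (nhds l))
    (F : StieltjesFunction ℝ) (hab : a ≤ b)
    (hFd : ∀ u v, u ∈ Set.Icc a b → v ∈ Set.Icc a b → u ≤ v → F v - F u = x v - x u)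
    (hmono : MonotoneOn x (Set.Icc a b))
    (hgm : Measurable g) {M : ℝ} (hM : 0 ≤ M)
    (hgb : ∀ z ∈ Set.Icc (x a) (x b), |g z| ≤ M) :
    Summable ((Jset x a b).indicator (Wfun x g)) ∧
    (∫ s in Set.Ioc a b, g (Function.leftLim x s) ∂F.measure) +
      (∑' s : ℝ, (Jset x a b).indicator (Wfun x g) s) =
    ∫ z in Set.Ioc (x a) (x b), g z := by
  classical
  set f : StieltjesFunction ℝ := clampStieltjes x a b hmono hab hrc with hf
  have hfIcc : ∀ u ∈ Set.Icc a b, f u = x u := fun u hu => clampStieltjes_apply x a b hmono hab hrc hu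
  have hfa : (f : ℝ → ℝ) a = x a := hfIcc a ⟨le_rfl, hab⟩
  have hfb : (f : ℝ → ℝ) b = x b := hfIcc b ⟨hab, le_rfl⟩
  have hfll : ∀ s ∈ Set.Ioc a b, Function.leftLim f s = Function.leftLim x s := by
    intro s hs
    refine leftLim_congr_left hs.1 (fun u hu => ?_) (cadlag_tendsto_leftLim hll s)
    exact hfIcc u ⟨hu.1.le, le_trans hu.2.le hs.2⟩
  have hSeq : Jset x a b = {s : ℝ | s ∈ Set.Ioc a b ∧ Function.leftLim f s < f s} := by
    ext s
    simp only [Jset, Set.mem_setOf_eq]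
    constructor
    · rintro ⟨h1, h2⟩
      exact ⟨h1, by rw [hfll s h1, hfIcc s (Set.mem_Icc_of_Ioc h1)]; exact h2⟩
    · rintro ⟨h1, h2⟩
      exact ⟨h1, by rw [← hfll s h1, ← hfIcc s (Set.mem_Icc_of_Ioc h1)]; exact h2⟩
  have hWeq : ∀ s ∈ Jset x a b, Wfun x g s =
      ∫ z in (Function.leftLim f s)..(f s), (g z - g (Function.leftLim f s)) := by
    intro s hs
    rw [Wfun]
    rw [hfll s hs.1, hfIcc s (Set.mem_Icc_of_Ioc hs.1)]
  -- bound for g on the f-range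
  have hgb' : ∀ z ∈ Set.Icc (f a) (f b), |g z| ≤ M := by rw [hfa, hfb]; exact hgb
  -- measure identification
  have hmeas_eq : F.measure.restrict (Set.Ioc a b) = f.measure.restrict (Set.Ioc a b) := by
    have hfin : IsFiniteMeasure (F.measure.restrict (Set.Ioc a b)) := by
      constructor
      rw [Measure.restrict_apply MeasurableSet.univ, Set.univ_inter,
        StieltjesFunction.measure_Ioc]
      exact ENNReal.ofReal_lt_top
    refine @MeasureTheory.Measure.ext_of_Ioc_finite ℝ _ _ _ _ _ _ _ _ hfin ?_ ?_
    · rw [Measure.restrict_apply MeasurableSet.univ, Measure.restrict_apply MeasurableSet.univ,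
        Set.univ_inter, StieltjesFunction.measure_Ioc, StieltjesFunction.measure_Ioc]
      congr 1
      rw [hfa, hfb] at *
      have := hFd a b ⟨le_rfl, hab⟩ ⟨hab, le_rfl⟩ hab
      linarith
    · intro c d _
      rw [Measure.restrict_apply measurableSet_Ioc, Measure.restrict_apply measurableSet_Ioc,
        Set.Ioc_inter_Ioc, StieltjesFunction.measure_Ioc, StieltjesFunction.measure_Ioc]
      rcases le_or_gt (max c a) (min d b) with hord | hord
      · have h1 : max c a ∈ Set.Icc a b := ⟨le_max_right _ _, le_trans hord (min_le_right _ _)⟩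
        have h2 : min d b ∈ Set.Icc a b := ⟨le_trans (le_max_right c a) hord, min_le_right _ _⟩
        congr 1
        rw [hfIcc _ h1, hfIcc _ h2]
        exact hFd _ _ h1 h2 hord
      · rw [ENNReal.ofReal_of_nonpos (by have := F.mono hord.le; linarith),
          ENNReal.ofReal_of_nonpos (by have := f.mono hord.le; linarith)]
  -- apply pieceL
  have hmain := pieceL f hab g hgm hM hgb'
  -- convert first term
  have hT1 : (∫ s in Set.Ioc a b, g (Function.leftLim f s) ∂f.measure) =
      ∫ s in Set.Ioc a b, g (Function.leftLim x s) ∂F.measure := by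
    have e1 : (∫ s in Set.Ioc a b, g (Function.leftLim f s) ∂f.measure) =
        ∫ s in Set.Ioc a b, g (Function.leftLim f s) ∂F.measure := by
      show (∫ s, g (Function.leftLim f s) ∂(f.measure.restrict (Set.Ioc a b))) =
        ∫ s, g (Function.leftLim f s) ∂(F.measure.restrict (Set.Ioc a b))
      rw [hmeas_eq]
    rw [e1]
    exact MeasureTheory.setIntegral_congr_fun measurableSet_Ioc (fun s hs => by rw [hfll s hs])
  -- convert tsum
  have hT2 : (∑' s : {s : ℝ // s ∈ Set.Ioc a b ∧ Function.leftLim f s < f s},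
      ∫ z in (Function.leftLim f s.1)..(f s.1), (g z - g (Function.leftLim f s.1))) =
      ∑' s : ℝ, (Jset x a b).indicator (Wfun x g) s := by
    have e1 : (∑' s : {s : ℝ // s ∈ Set.Ioc a b ∧ Function.leftLim f s < f s},
        ∫ z in (Function.leftLim f s.1)..(f s.1), (g z - g (Function.leftLim f s.1)))
        = ∑' s : ℝ, ({s : ℝ | s ∈ Set.Ioc a b ∧ Function.leftLim f s < f s}).indicator
            (fun s => ∫ z in (Function.leftLim f s)..(f s), (g z - g (Function.leftLim f s))) s := by
      exact tsum_subtype {s : ℝ | s ∈ Set.Ioc a b ∧ Function.leftLim f s < f s}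
        (fun s => ∫ z in (Function.leftLim f s)..(f s), (g z - g (Function.leftLim f s)))
    rw [e1]
    apply tsum_congr
    intro s
    rw [← hSeq]
    by_cases hs : s ∈ Jset x a b
    · rw [Set.indicator_of_mem hs, Set.indicator_of_mem hs, hWeq s hs]
    · rw [Set.indicator_of_notMem hs, Set.indicator_of_notMem hs]
  -- summability
  have hsummable : Summable ((Jset x a b).indicator (Wfun x g)) := by
    rw [← summable_subtype_iff_indicator]
    have hcnt : (Jset x a b).Countable := by
      rw [hSeq]
      apply (f.mono.countable_not_continuousAt).mono
      intro s hs
      simp only [Set.mem_setOf_eq]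
      intro hcont
      have : Function.leftLim f s = f s :=
        leftLim_eq_of_tendsto
          (hcont.tendsto.mono_left nhdsWithin_le_nhds)
      exact absurd this (ne_of_lt hs.2)
    haveI : Countable (Jset x a b) := hcnt.to_subtype
    -- summable majorant via the Stieltjes measure
    have hjump_fin : (∑' s : Jset x a b, ENNReal.ofReal (x s.1 - Function.leftLim x s.1)) ≠ ⊤ := by
      have heq : ∀ s : Jset x a b, ENNReal.ofReal (x s.1 - Function.leftLim x s.1)
          = f.measure {s.1} := by
        intro s
        rw [StieltjesFunction.measure_singleton, hfll s.1 s.2.1,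
          hfIcc s.1 (Set.mem_Icc_of_Ioc s.2.1)]
      rw [tsum_congr heq]
      have huni : (∑' s : Jset x a b, f.measure {s.1}) = f.measure (Jset x a b) := by
        rw [← MeasureTheory.measure_iUnion ?_ (fun s => measurableSet_singleton _)]
        · congr 1
          exact Set.iUnion_of_singleton_coe _
        · intro s t hst
          simp only [Set.disjoint_singleton]
          exact fun h => hst (Subtype.ext h)
      rw [huni]
      refine ne_top_of_le_ne_top ?_ (measure_mono (fun s hs => hs.1))
      rw [StieltjesFunction.measure_Ioc]
      exact ENNReal.ofReal_ne_top
    have hmaj : Summable (fun s : Jset x a b => (2*M) * (x s.1 - Function.leftLim x s.1)) := by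
      apply Summable.mul_left
      have := ENNReal.summable_toReal hjump_fin
      refine this.congr fun s => ?_
      exact ENNReal.toReal_ofReal (by have := s.2.2; linarith)
    refine Summable.of_norm_bounded hmaj ?_
    intro s
    show ‖Wfun x g s.1‖ ≤ (2*M) * (x s.1 - Function.leftLim x s.1)
    have hjb : Function.leftLim x s.1 ≤ x s.1 := s.2.2.le
    have hbnd : ∀ z ∈ Set.uIoc (Function.leftLim x s.1) (x s.1),
        ‖g z - g (Function.leftLim x s.1)‖ ≤ 2*M := by
      intro z hz
      rw [Set.uIoc_of_le hjb] at hz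
      have hz1 : z ∈ Set.Icc (x a) (x b) := by
        constructor
        · calc x a = f a := hfa.symm
          _ ≤ Function.leftLim f s.1 := f.mono.le_leftLim s.2.1.1
          _ = Function.leftLim x s.1 := hfll s.1 s.2.1
          _ ≤ z := hz.1.le
        · calc z ≤ x s.1 := hz.2
          _ = f s.1 := (hfIcc s.1 (Set.mem_Icc_of_Ioc s.2.1)).symm
          _ ≤ f b := f.mono s.2.1.2
          _ = x b := hfb
      have hz2 : Function.leftLim x s.1 ∈ Set.Icc (x a) (x b) := by
        constructor
        · rw [← hfll s.1 s.2.1, ← hfa]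
          exact f.mono.le_leftLim s.2.1.1
        · calc Function.leftLim x s.1 ≤ x s.1 := hjb
          _ = f s.1 := (hfIcc s.1 (Set.mem_Icc_of_Ioc s.2.1)).symm
          _ ≤ f b := f.mono s.2.1.2
          _ = x b := hfb
      rw [Real.norm_eq_abs]
      calc |g z - g (Function.leftLim x s.1)| ≤ |g z| + |g (Function.leftLim x s.1)| := abs_sub _ _
      _ ≤ M + M := add_le_add (hgb z hz1) (hgb _ hz2)
      _ = 2*M := by ring
    calc ‖Wfun x g s.1‖ ≤ (2*M) * |x s.1 - Function.leftLim x s.1| :=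
      intervalIntegral.norm_integral_le_of_norm_le_const hbnd
    _ = (2*M) * (x s.1 - Function.leftLim x s.1) := by rw [abs_of_nonneg (by linarith)]
  refine ⟨hsummable, ?_⟩
  rw [← hT1, ← hT2, hmain, hfa, hfb]

lemma piece_term_anti
    (hll : ∀ a : ℝ, ∃ l : ℝ, Tendsto x (nhdsWithin a (Set.Iio a)) (nhds l))
    (F : StieltjesFunction ℝ) (hab : a ≤ b)
    (hFc : ∀ u v, u ∈ Set.Icc a b → v ∈ Set.Icc a b → u ≤ v → F v - F u = 0)
    (hanti : AntitoneOn x (Set.Icc a b)) :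
    Summable ((Jset x a b).indicator (Wfun x g)) ∧
    (∫ s in Set.Ioc a b, g (Function.leftLim x s) ∂F.measure) +
      (∑' s : ℝ, (Jset x a b).indicator (Wfun x g) s) =
    ∫ z in Set.Ioc (x a) (x b), g z := by
  have hJempty : Jset x a b = ∅ := by
    ext s
    simp only [Jset, Set.mem_setOf_eq, Set.mem_empty_iff_false, iff_false, not_and]
    intro hs
    exact not_lt.2 (antitone_no_up_jump hanti hll hs)
  rw [hJempty]
  simp only [Set.indicator_empty]
  refine ⟨summable_zero, ?_⟩
  rw [tsum_zero, add_zero]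
  have h1 : F.measure.restrict (Set.Ioc a b) = 0 := by
    rw [Measure.restrict_eq_zero, StieltjesFunction.measure_Ioc]
    rw [ENNReal.ofReal_eq_zero]
    have := hFc a b ⟨le_rfl, hab⟩ ⟨hab, le_rfl⟩ hab
    linarith
  have h2 : Set.Ioc (x a) (x b) = ∅ :=
    Set.Ioc_eq_empty (not_lt.2 (hanti ⟨le_rfl, hab⟩ ⟨hab, le_rfl⟩ hab))
  rw [h2]
  show (∫ s, g (Function.leftLim x s) ∂(F.measure.restrict (Set.Ioc a b))) = _
  rw [h1]
  simp

end Part7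

/-- Change-of-variable formula for level upcrossings of a piecewise monotone càdlàg
path: `∫_ℝ g(z)·u^z(x,[0,t]) dz = ∫_{(0,t]} g(x_{s−}) dUTV(x,·)
+ Σ_{0<s≤t, Δx_s>0} ∫_{x_{s−}}^{x_s} (g(z) − g(x_{s−})) dz`. -/
theorem integral_upcross_eq (x : ℝ → ℝ) (hx : Cadlag x) (hpm : PiecewiseMonotone x)
    (t : ℝ) (ht : 0 < t) (g : ℝ → ℝ) (hgm : Measurable g)
    (hgb : ∀ r : ℝ, 0 < r → ∃ M : ℝ, ∀ z : ℝ, |z| ≤ r → |g z| ≤ M)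
    (F : StieltjesFunction ℝ) (hF : ∀ u : ℝ, 0 ≤ u → F u = (upVar x 0 u).toReal) :
    ∫ z : ℝ, g z * (levelUpcross x z 0 t).toReal =
      (∫ s in Set.Ioc (0 : ℝ) t, g (Function.leftLim x s) ∂F.measure) +
        ∑' s : {s : ℝ // s ∈ Set.Ioc (0 : ℝ) t ∧ Function.leftLim x s < x s},
          ∫ z in (Function.leftLim x s.1)..(x s.1), (g z - g (Function.leftLim x s.1)) := by
  classical
  obtain ⟨N, τF, hτF, hτF0, hτFN, hpcs⟩ := hpm t ht
  set τ : ℕ → ℝ := fun j => τF ⟨min j N, Nat.lt_succ_of_le (min_le_right j N)⟩ with hτdef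
  have hτ : Monotone τ := by
    intro i j hij
    exact hτF (show (⟨min i N, _⟩ : Fin (N+1)) ≤ ⟨min j N, _⟩ from by
      simp only [Fin.mk_le_mk]
      exact min_le_min hij le_rfl)
  have hτ0 : τ 0 = 0 := by
    have h : (⟨min 0 N, Nat.lt_succ_of_le (min_le_right 0 N)⟩ : Fin (N+1)) = 0 := by
      apply Fin.ext; simp
    show τF _ = 0
    rw [h, hτF0]
  have hτN : τ N = t := by
    have h : (⟨min N N, Nat.lt_succ_of_le (min_le_right N N)⟩ : Fin (N+1)) = Fin.last N := by
      apply Fin.ext; simp [Fin.last]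
    show τF _ = t
    rw [h, hτFN]
  have hstab : ∀ j, N ≤ j → τ j = τ N := by
    intro j hj
    show τF _ = τF _
    congr 1
    apply Fin.ext
    simp [min_eq_right hj, min_self]
  have hpieces : ∀ j, MonotoneOn x (Set.Icc (τ j) (τ (j+1))) ∨
      AntitoneOn x (Set.Icc (τ j) (τ (j+1))) := by
    intro j
    rcases lt_or_ge j N with hj | hj
    · have h1 : τ j = τF (⟨j, hj⟩ : Fin N).castSucc := by
        show τF _ = τF _
        congr 1
        apply Fin.ext
        simp [Fin.castSucc, Fin.castAdd, Fin.castLE, min_eq_left hj.le]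
      have h2 : τ (j+1) = τF (⟨j, hj⟩ : Fin N).succ := by
        show τF _ = τF _
        congr 1
        apply Fin.ext
        simp [Fin.succ, min_eq_left (Nat.succ_le_of_lt hj)]
      rw [h1, h2]
      exact hpcs _
    · rw [hstab j hj, hstab (j+1) (le_trans hj (Nat.le_succ j))]
      left
      intro p hp q hq _
      rw [Set.Icc_self, Set.mem_singleton_iff] at hp hq
      rw [hp, hq]
  have hτ0le : ∀ j, 0 ≤ τ j := fun j => hτ0 ▸ hτ (Nat.zero_le j)
  have hτleN : ∀ j, τ j ≤ τ N := by
    intro j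
    rcases le_or_gt j N with h | h
    · exact hτ h
    · rw [hstab j h.le]
  have hrc := hx.1
  have hllx := hx.2
  -- global bound on grid values
  obtain ⟨R, hRmem⟩ : ∃ R : ℝ, ∀ i, |x (τ i)| ≤ R := by
    have hne : ((Finset.range (N+1)).image (fun i => |x (τ i)|)).Nonempty :=
      ⟨|x (τ 0)|, Finset.mem_image_of_mem _ (by simp)⟩
    refine ⟨((Finset.range (N+1)).image (fun i => |x (τ i)|)).max' hne, ?_⟩
    intro i
    rcases le_or_gt i N with h | h
    · exact Finset.le_max' _ _ (Finset.mem_image_of_mem (fun i => |x (τ i)|)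
        (Finset.mem_range.2 (Nat.lt_succ_of_le h)))
    · rw [hstab i h.le]
      exact Finset.le_max' _ _ (Finset.mem_image_of_mem (fun i => |x (τ i)|)
        (Finset.mem_range.2 (Nat.lt_succ_self N)))
  have hR0 : 0 ≤ R := le_trans (abs_nonneg _) (hRmem 0)
  obtain ⟨M₀, hM₀⟩ := hgb (R+1) (by linarith)
  set M : ℝ := max M₀ 0 with hMdef
  have hM0 : 0 ≤ M := le_max_right _ _
  have hgbR : ∀ z : ℝ, |z| ≤ R → |g z| ≤ M :=
    fun z hz => le_trans (hM₀ z (by linarith)) (le_max_left _ _)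
  have hgbIcc : ∀ i j : ℕ, ∀ z ∈ Set.Icc (x (τ i)) (x (τ j)), |g z| ≤ M := by
    intro i j z hz
    apply hgbR
    rw [abs_le]
    exact ⟨by linarith [hz.1, (abs_le.1 (hRmem i)).1], by linarith [hz.2, (abs_le.1 (hRmem j)).2]⟩
  -- upVar values along the grid
  have hsplit : ∀ j, ∀ s ∈ Set.Icc (τ j) (τ (j+1)),
      upVar x 0 s = upVar x 0 (τ j) + ENNReal.ofReal (x s - x (τ j)) := by
    intro j s hs
    refine upVar_split_piece (hτ0le j) hs.1 ?_
    rcases hpieces j with h | h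
    · exact Or.inl (h.mono (Set.Icc_subset_Icc_right hs.2))
    · exact Or.inr (h.mono (Set.Icc_subset_Icc_right hs.2))
  have hfin : ∀ j, upVar x 0 (τ j) ≠ ⊤ := by
    intro j
    induction j with
    | zero =>
      rw [hτ0, upVar_piece le_rfl (Or.inl ?_)]
      · exact ENNReal.ofReal_ne_top
      · intro p hp q hq _
        rw [Set.Icc_self, Set.mem_singleton_iff] at hp hq
        rw [hp, hq]
    | succ j ih =>
      rw [hsplit j (τ (j+1)) ⟨hτ (Nat.le_succ j), le_rfl⟩]
      exact ENNReal.add_ne_top.2 ⟨ih, ENNReal.ofReal_ne_top⟩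
  have hFval : ∀ j, ∀ s ∈ Set.Icc (τ j) (τ (j+1)),
      F s = F (τ j) + max (x s - x (τ j)) 0 := by
    intro j s hs
    rw [hF s (le_trans (hτ0le j) hs.1), hF (τ j) (hτ0le j), hsplit j s hs,
      ENNReal.toReal_add (hfin j) ENNReal.ofReal_ne_top, ENNReal.toReal_ofReal']
  have hFdmono : ∀ j, MonotoneOn x (Set.Icc (τ j) (τ (j+1))) →
      ∀ u v, u ∈ Set.Icc (τ j) (τ (j+1)) → v ∈ Set.Icc (τ j) (τ (j+1)) → u ≤ v →
        F v - F u = x v - x u := by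
    intro j hm u v hu hv huv
    have hj1 : (τ j) ∈ Set.Icc (τ j) (τ (j+1)) := ⟨le_rfl, hτ (Nat.le_succ j)⟩
    have h1 : 0 ≤ x u - x (τ j) := sub_nonneg.2 (hm hj1 hu hu.1)
    have h2 : 0 ≤ x v - x (τ j) := sub_nonneg.2 (hm hj1 hv hv.1)
    rw [hFval j u hu, hFval j v hv, max_eq_left h1, max_eq_left h2]
    ring
  have hFdanti : ∀ j, AntitoneOn x (Set.Icc (τ j) (τ (j+1))) →
      ∀ u v, u ∈ Set.Icc (τ j) (τ (j+1)) → v ∈ Set.Icc (τ j) (τ (j+1)) → u ≤ v →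
        F v - F u = 0 := by
    intro j hm u v hu hv huv
    have hj1 : (τ j) ∈ Set.Icc (τ j) (τ (j+1)) := ⟨le_rfl, hτ (Nat.le_succ j)⟩
    have h1 : x u - x (τ j) ≤ 0 := sub_nonpos.2 (hm hj1 hu hu.1)
    have h2 : x v - x (τ j) ≤ 0 := sub_nonpos.2 (hm hj1 hv hv.1)
    rw [hFval j u hu, hFval j v hv, max_eq_right h1, max_eq_right h2]
    ring
  -- the per-piece identity
  have hpieceterm : ∀ j, Summable ((Jset x (τ j) (τ (j+1))).indicator (Wfun x g)) ∧
      (∫ s in Set.Ioc (τ j) (τ (j+1)), g (Function.leftLim x s) ∂F.measure) +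
        (∑' s : ℝ, (Jset x (τ j) (τ (j+1))).indicator (Wfun x g) s) =
      ∫ z in Set.Ioc (x (τ j)) (x (τ (j+1))), g z := by
    intro j
    have hab : τ j ≤ τ (j+1) := hτ (Nat.le_succ j)
    rcases hpieces j with hm | ha
    · exact piece_term_mono g hrc hllx F hab (hFdmono j hm) hm hgm hM0 (hgbIcc j (j+1))
    · exact piece_term_anti g hllx F hab (hFdanti j ha) ha
  -- covering and disjointness
  have hIocU : Set.Ioc (0:ℝ) t = ⋃ i ∈ Finset.range N, Set.Ioc (τ i) (τ (i+1)) := by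
    ext s
    simp only [Set.mem_iUnion, Finset.mem_range, exists_prop]
    constructor
    · intro hs
      exact grid_cover hτ N s (by rw [hτ0, hτN]; exact hs)
    · rintro ⟨i, hi, hs⟩
      exact ⟨lt_of_le_of_lt (hτ0le i) hs.1, le_trans hs.2 (by rw [← hτN]; exact hτleN (i+1))⟩
  have hpdisj : ∀ i j : ℕ, i ≠ j → ∀ s : ℝ, s ∈ Set.Ioc (τ i) (τ (i+1)) →
      s ∈ Set.Ioc (τ j) (τ (j+1)) → False := by
    intro i j hij s hsi hsj
    rcases lt_or_gt_of_ne hij with h | h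
    · exact absurd (lt_of_le_of_lt (le_trans hsi.2 (hτ h)) hsj.1) (lt_irrefl s)
    · exact absurd (lt_of_le_of_lt (le_trans hsj.2 (hτ h)) hsi.1) (lt_irrefl s)
  have hdisjoint : (↑(Finset.range N) : Set ℕ).Pairwise
      (Function.onFun Disjoint (fun i => Set.Ioc (τ i) (τ (i+1)))) := by
    intro i _ j _ hij
    rw [Function.onFun, Set.disjoint_left]
    intro s hsi hsj
    exact hpdisj i j hij s hsi hsj
  -- left limit bound
  have hllbound : ∀ s ∈ Set.Ioc (0:ℝ) t, |Function.leftLim x s| ≤ R := by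
    intro s hs
    obtain ⟨j, hjN, hj⟩ := grid_cover hτ N s (by rw [hτ0, hτN]; exact hs)
    have hev : ∀ᶠ u in nhdsWithin s (Set.Iio s), |x u| ≤ R := by
      filter_upwards [Ioo_mem_nhdsLT_of_mem (show s ∈ Set.Ioc (τ j) s from ⟨hj.1, le_rfl⟩)]
        with u hu
      have humem : u ∈ Set.Icc (τ j) (τ (j+1)) := ⟨hu.1.le, le_trans hu.2.le hj.2⟩
      have hj1 : (τ j) ∈ Set.Icc (τ j) (τ (j+1)) := ⟨le_rfl, hτ (Nat.le_succ j)⟩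
      have hj2 : (τ (j+1)) ∈ Set.Icc (τ j) (τ (j+1)) := ⟨hτ (Nat.le_succ j), le_rfl⟩
      have hRj := abs_le.1 (hRmem j)
      have hRj1 := abs_le.1 (hRmem (j+1))
      rcases hpieces j with hm | ha
      · have h1 := hm hj1 humem humem.1
        have h2 := hm humem hj2 humem.2
        rw [abs_le]
        exact ⟨by linarith, by linarith⟩
      · have h1 := ha hj1 humem humem.1
        have h2 := ha humem hj2 humem.2
        rw [abs_le]
        exact ⟨by linarith, by linarith⟩
    rw [abs_le]
    constructor
    · exact ge_of_tendsto (cadlag_tendsto_leftLim hllx s) (hev.mono fun u hu => (abs_le.1 hu).1)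
    · exact le_of_tendsto (cadlag_tendsto_leftLim hllx s) (hev.mono fun u hu => (abs_le.1 hu).2)
  -- measurable piecewise representative of leftLim x on (0,t]
  obtain ⟨H, hHm, hHeq⟩ : ∃ H : ℝ → ℝ, Measurable H ∧
      ∀ s ∈ Set.Ioc (0:ℝ) t, H s = Function.leftLim x s := by
    refine ⟨fun s => ∑ i ∈ Finset.range N, (Set.Ioc (τ i) (τ (i+1))).indicator
      (fun u => Function.leftLim (fun w => x (max (τ i) (min w (τ (i+1))))) u) s, ?_, ?_⟩
    · apply Finset.measurable_sum
      intro i _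
      refine Measurable.indicator ?_ measurableSet_Ioc
      have hclmem : ∀ w : ℝ, max (τ i) (min w (τ (i+1))) ∈ Set.Icc (τ i) (τ (i+1)) :=
        fun w => ⟨le_max_left _ _, max_le (hτ (Nat.le_succ i)) (min_le_right _ _)⟩
      rcases hpieces i with hm | ha
      · have : Monotone (fun w => x (max (τ i) (min w (τ (i+1))))) := by
          intro u v huv
          exact hm (hclmem u) (hclmem v) (max_le_max le_rfl (min_le_min huv le_rfl))
        exact this.leftLim.measurable
      · have : Antitone (fun w => x (max (τ i) (min w (τ (i+1))))) := by
          intro u v huv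
          exact ha (hclmem u) (hclmem v) (max_le_max le_rfl (min_le_min huv le_rfl))
        exact this.leftLim.measurable
    · intro s hs
      obtain ⟨j, hjN, hj⟩ := grid_cover hτ N s (by rw [hτ0, hτN]; exact hs)
      beta_reduce
      rw [Finset.sum_eq_single j]
      · rw [Set.indicator_of_mem hj]
        refine leftLim_congr_left hj.1 (fun u hu => ?_) (cadlag_tendsto_leftLim hllx s)
        have h1 : min u (τ (j+1)) = u := min_eq_left (le_trans hu.2.le hj.2)
        have h2 : max (τ j) u = u := max_eq_right hu.1.le
        simp only [h1, h2]
      · intro i _ hne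
        exact Set.indicator_of_notMem (fun hmem => hpdisj i j hne s hmem hj) _
      · intro h
        exact absurd (Finset.mem_range.2 hjN) h
  -- integrability of the Stieltjes integrand
  have hIntLL : MeasureTheory.IntegrableOn (fun s => g (Function.leftLim x s))
      (Set.Ioc 0 t) F.measure := by
    have haesm : MeasureTheory.AEStronglyMeasurable (fun s => g (Function.leftLim x s))
        (F.measure.restrict (Set.Ioc 0 t)) := by
      refine ((hgm.comp hHm).aestronglyMeasurable).congr ?_
      refine (ae_restrict_iff' measurableSet_Ioc).2 (Filter.Eventually.of_forall fun s hs => ?_)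
      simp only [Function.comp_apply]
      rw [hHeq s hs]
    have hc : MeasureTheory.IntegrableOn (fun _ : ℝ => M) (Set.Ioc 0 t) F.measure := by
      refine (MeasureTheory.integrableOn_const_iff (by finiteness)).2 (Or.inr ?_)
      rw [StieltjesFunction.measure_Ioc]
      exact ENNReal.ofReal_lt_top
    refine MeasureTheory.Integrable.mono' hc haesm ?_
    refine (ae_restrict_iff' measurableSet_Ioc).2 (Filter.Eventually.of_forall fun s hs => ?_)
    rw [Real.norm_eq_abs]
    exact hgbR _ (hllbound s hs)
  have hsplitF : (∫ s in Set.Ioc (0:ℝ) t, g (Function.leftLim x s) ∂F.measure)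
      = ∑ i ∈ Finset.range N,
          ∫ s in Set.Ioc (τ i) (τ (i+1)), g (Function.leftLim x s) ∂F.measure := by
    rw [hIocU] at hIntLL ⊢
    exact MeasureTheory.integral_biUnion_finset (Finset.range N)
      (fun i _ => measurableSet_Ioc) hdisjoint
      (fun i hi => hIntLL.mono_set (fun s hs => Set.mem_iUnion₂.2 ⟨i, hi, hs⟩))
  -- jump sum splits
  have hSind : ∀ s : ℝ, (Jset x 0 t).indicator (Wfun x g) s =
      ∑ i ∈ Finset.range N, (Jset x (τ i) (τ (i+1))).indicator (Wfun x g) s := by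
    intro s
    by_cases hs : s ∈ Jset x 0 t
    · obtain ⟨j, hjN, hj⟩ := grid_cover hτ N s (by rw [hτ0, hτN]; exact hs.1)
      rw [Set.indicator_of_mem hs, Finset.sum_eq_single j]
      · rw [Set.indicator_of_mem (show s ∈ Jset x (τ j) (τ (j+1)) from ⟨hj, hs.2⟩)]
      · intro i _ hne
        exact Set.indicator_of_notMem (fun hmem => hpdisj i j hne s hmem.1 hj) _
      · intro h
        exact absurd (Finset.mem_range.2 hjN) h
    · rw [Set.indicator_of_notMem hs, eq_comm]
      apply Finset.sum_eq_zero
      intro i _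
      refine Set.indicator_of_notMem (fun hmem => hs ⟨⟨?_, ?_⟩, hmem.2⟩) _
      · exact lt_of_le_of_lt (hτ0le i) hmem.1.1
      · exact le_trans hmem.1.2 (by rw [← hτN]; exact hτleN (i+1))
  have hjumpsplit : (∑' s : ℝ, (Jset x 0 t).indicator (Wfun x g) s)
      = ∑ i ∈ Finset.range N, ∑' s : ℝ, (Jset x (τ i) (τ (i+1))).indicator (Wfun x g) s := by
    rw [tsum_congr hSind]
    exact Summable.tsum_finsetSum (fun i _ => (hpieceterm i).1)
  have hgoal2 : (∑' s : {s : ℝ // s ∈ Set.Ioc (0:ℝ) t ∧ Function.leftLim x s < x s},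
      ∫ z in (Function.leftLim x s.1)..(x s.1), (g z - g (Function.leftLim x s.1)))
      = ∑' s : ℝ, (Jset x 0 t).indicator (Wfun x g) s := by
    exact tsum_subtype (Jset x 0 t) (Wfun x g)
  -- LHS
  have hU0 : (volume : Measure ℝ) (⋃ i ∈ Finset.range (N+1), {x (τ i)}) = 0 := by
    apply Set.Finite.measure_zero
    exact Set.Finite.biUnion (Finset.range (N+1)).finite_toSet (fun i _ => Set.finite_singleton _)
  have hae : (fun z => g z * (levelUpcross x z 0 t).toReal)
      =ᵐ[volume] (fun z => ∑ i ∈ Finset.range N,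
        (Set.Ioo (x (τ i)) (x (τ (i+1)))).indicator g z) := by
    have h0 : ∀ᵐ z ∂(volume : Measure ℝ), z ∉ ⋃ i ∈ Finset.range (N+1), {x (τ i)} := by
      rw [MeasureTheory.ae_iff]
      simp only [not_not]
      rw [Set.setOf_mem_eq]
      exact hU0
    filter_upwards [h0] with z hz
    have hzne : ∀ i, i ≤ N → z ≠ x (τ i) := by
      intro i hi heq
      exact hz (Set.mem_biUnion (Finset.mem_range.2 (Nat.lt_succ_of_le hi))
        (by rw [heq]; exact Set.mem_singleton _))
    rw [← hτN, levelUpcross_grid x τ hτ hτ0 hpieces N hstab z hzne,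
      ENNReal.toReal_natCast, Finset.card_filter]
    push_cast
    rw [Finset.mul_sum]
    apply Finset.sum_congr rfl
    intro i _
    by_cases hP : x (τ i) < z ∧ z < x (τ (i+1))
    · rw [if_pos hP, mul_one, Set.indicator_of_mem (Set.mem_Ioo.2 hP)]
    · rw [if_neg hP, mul_zero,
        Set.indicator_of_notMem (fun hm => hP (Set.mem_Ioo.1 hm))]
  have hIntInd : ∀ i : ℕ, MeasureTheory.Integrable
      ((Set.Ioo (x (τ i)) (x (τ (i+1)))).indicator g) volume := by
    intro i
    refine MeasureTheory.IntegrableOn.integrable_indicator ?_ measurableSet_Ioo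
    have hc : MeasureTheory.IntegrableOn (fun _ : ℝ => M)
        (Set.Ioo (x (τ i)) (x (τ (i+1)))) volume :=
      (MeasureTheory.integrableOn_const_iff (by finiteness)).2 (Or.inr measure_Ioo_lt_top)
    refine MeasureTheory.Integrable.mono' hc hgm.aestronglyMeasurable.restrict ?_
    refine (ae_restrict_iff' measurableSet_Ioo).2 (Filter.Eventually.of_forall fun z hz => ?_)
    rw [Real.norm_eq_abs]
    exact hgbIcc i (i+1) z (Set.mem_Icc_of_Ioo hz)
  have hLHS : (∫ z : ℝ, g z * (levelUpcross x z 0 t).toReal)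
      = ∑ i ∈ Finset.range N, ∫ z in Set.Ioc (x (τ i)) (x (τ (i+1))), g z := by
    rw [MeasureTheory.integral_congr_ae hae,
      MeasureTheory.integral_finset_sum _ (fun i _ => hIntInd i)]
    apply Finset.sum_congr rfl
    intro i _
    rw [MeasureTheory.integral_indicator measurableSet_Ioo]
    exact MeasureTheory.integral_Ioc_eq_integral_Ioo.symm
  -- conclude
  rw [hLHS, hgoal2, hjumpsplit, hsplitF, ← Finset.sum_add_distrib]
  apply Finset.sum_congr rfl
  intro i _
  exact ((hpieceterm i).2).symm
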